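/- arXiv:2402.09117 — 4 statements merged into one kernel-verified Lean document; each statement's English description precedes it below -/
import Mathlib

section
/- Let W be a channel with arbitrary input alphabet 𝒳 and finite output alphabet 𝒴, let n ≥ 1 be a block length, let 0 < δ ≤ √n · log₂|𝒴|, and let x^n ∈ 𝒳^n. Then the product output distribution satisfies W_{x^n}(𝒯_{x^n}^δ) ≥ 1 − 2 · 2^{−δ²/(36·K(|𝒴|))}, where K(d) = (log₂ max{d,3})². -/
open Real Filter

namespace DIChannel

variable {X Y : Type*}

/-- `p` is a probability distribution on the finite alphabet `Y`. -/
def IsDist [Fintype Y] (p : Y → ℝ) : Prop := (∀ y, 0 ≤ p y) ∧ ∑ y, p y = 1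

/-- Product (memoryless) output distribution `W_{x^n}` on `Y^n`. -/
noncomputable def prodP [Fintype Y] (W : X → Y → ℝ) {n : ℕ} (u : Fin n → X)
    (y : Fin n → Y) : ℝ := ∏ i, W (u i) (y i)

/-- Probability of a set of output words under `W_{x^n}`. -/
noncomputable def probOf [Fintype Y] (W : X → Y → ℝ) {n : ℕ} (u : Fin n → X)
    (E : Finset (Fin n → Y)) : ℝ := ∑ y ∈ E, prodP W u y

/-- Shannon entropy, base 2. -/
noncomputable def H2 [Fintype Y] (p : Y → ℝ) : ℝ := -∑ y, p y * Real.logb 2 (p y)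

/-- `H(W_{x^n}) = ∑ i H(W_{x_i})`. -/
noncomputable def Hn [Fintype Y] (W : X → Y → ℝ) {n : ℕ} (u : Fin n → X) : ℝ :=
  ∑ i, H2 (W (u i))

open scoped Classical in
/-- The entropy conditional typical set `𝒯_{x^n}^δ` (points of zero probability excluded). -/
noncomputable def typSet [Fintype Y] (W : X → Y → ℝ) {n : ℕ} (u : Fin n → X) (δ : ℝ) :
    Finset (Fin n → Y) :=
  Finset.univ.filter fun y =>
    0 < prodP W u y ∧ |Real.logb 2 (prodP W u y) + Hn W u| ≤ δ * Real.sqrt n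

/-- `K(d) = (log₂ max{d,3})²`. -/
noncomputable def Kf (d : ℕ) : ℝ := (Real.logb 2 (max d 3 : ℕ)) ^ 2

end DIChannel

open DIChannel


lemma aux_exp_mul_one_sub_le (x : ℝ) : Real.exp x * (1 - x) ≤ 1 := by
  rcases le_or_gt (1 - x) 0 with h | h
  · have := (Real.exp_pos x).le
    nlinarith
  · have h1 : -x + 1 ≤ Real.exp (-x) := Real.add_one_le_exp (-x)
    have h2 : Real.exp x * Real.exp (-x) = 1 := by
      rw [← Real.exp_add]; simp
    nlinarith [(Real.exp_pos x).le]

lemma aux_exp_sub_one_le (a : ℝ) : Real.exp a - 1 ≤ a * Real.exp a := by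
  have := aux_exp_mul_one_sub_le a
  nlinarith

lemma aux_exp_neg_le (a : ℝ) (ha : 0 ≤ a) : Real.exp (-a) ≤ 1 - a + a ^ 2 := by
  have h := aux_exp_mul_one_sub_le (-a)
  nlinarith [(Real.exp_pos (-a)).le]

lemma aux_exp_le_inv (x : ℝ) (h : x < 1) : Real.exp x ≤ 1 / (1 - x) := by
  have h1 := aux_exp_mul_one_sub_le x
  rw [le_div_iff₀ (by linarith)]
  linarith

lemma aux_mono (w v t' : ℝ) (ht0 : 0 < t') (h2 : 2 ≤ t' * w) (hwv : w ≤ v) :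
    v ^ 2 * Real.exp (-(t' * v)) ≤ w ^ 2 * Real.exp (-(t' * w)) := by
  have hw : 0 < w := by nlinarith
  have hv : 0 < v := lt_of_lt_of_le hw hwv
  have key : v / w ≤ Real.exp (t' * (v - w) / 2) := by
    have := Real.add_one_le_exp (t' * (v - w) / 2)
    have hvw : v / w ≤ 1 + t' * (v - w) / 2 := by
      rw [div_le_iff₀ hw]; nlinarith
    linarith
  have key2 : v ^ 2 / w ^ 2 ≤ Real.exp (t' * (v - w)) := by
    have h0 : 0 ≤ v / w := by positivity
    have hm := mul_le_mul key key h0 (Real.exp_pos _).le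
    have he : Real.exp (t' * (v - w) / 2) * Real.exp (t' * (v - w) / 2)
        = Real.exp (t' * (v - w)) := by rw [← Real.exp_add]; ring_nf
    calc v ^ 2 / w ^ 2 = (v / w) * (v / w) := by ring
    _ ≤ _ := hm
    _ = _ := he
  have hEp := (Real.exp_pos (-(t' * v))).le
  have hstep : v ^ 2 * Real.exp (-(t' * v)) ≤ (Real.exp (t' * (v - w)) * w ^ 2) * Real.exp (-(t' * v)) := by
    have := mul_le_mul_of_nonneg_right ((div_le_iff₀ (by positivity : (0:ℝ) < w ^ 2)).mp key2) hEp
    linarith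
  calc v ^ 2 * Real.exp (-(t' * v)) ≤ (Real.exp (t' * (v - w)) * w ^ 2) * Real.exp (-(t' * v)) := hstep
  _ = w ^ 2 * (Real.exp (t' * (v - w)) * Real.exp (-(t' * v))) := by ring
  _ = w ^ 2 * Real.exp (-(t' * w)) := by rw [← Real.exp_add]; ring_nf

/-- scalar per-term bound -/
lemma aux_term (v t Ln : ℝ) (hv0 : 0 ≤ v) (hLn : 1 ≤ Ln) (ht0 : 0 < t)
    (htL : t * Ln ≤ 1 / 20) :
    Real.exp (-v) * v ^ 2 * Real.exp (t * v)
      ≤ (50/7) * Ln ^ 2 * Real.exp (-v) + (50/7) * Ln ^ 2 * Real.exp (-((5/2) * Ln)) := by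
  have hLn0 : 0 < Ln := by linarith
  have ht20 : t ≤ 1 / 20 := by nlinarith
  have hexp18 : Real.exp (1/8 : ℝ) ≤ 8/7 := by
    have := aux_exp_le_inv (1/8) (by norm_num)
    linarith
  rcases le_or_gt v ((5/2) * Ln) with hcase | hcase
  · have hetv : Real.exp (t * v) ≤ 8/7 := by
      calc Real.exp (t * v) ≤ Real.exp (1/8) := by
            apply Real.exp_le_exp.mpr; nlinarith
      _ ≤ 8/7 := hexp18
    have hv2 : v ^ 2 ≤ (25/4) * Ln ^ 2 := by nlinarith
    have hq0 : (0:ℝ) ≤ Real.exp (-v) := (Real.exp_pos _).le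
    have hmain : Real.exp (-v) * v ^ 2 * Real.exp (t * v)
        ≤ Real.exp (-v) * ((25/4) * Ln ^ 2) * (8/7) := by
      apply mul_le_mul
      · exact mul_le_mul_of_nonneg_left hv2 hq0
      · exact hetv
      · positivity
      · positivity
    have hR : (0:ℝ) ≤ (50/7) * Ln ^ 2 * Real.exp (-((5/2) * Ln)) := by positivity
    nlinarith
  · have htv : 0 < 1 - t := by linarith
    have h2w : 2 ≤ (1 - t) * ((5/2) * Ln) := by nlinarith
    have hmono := aux_mono ((5/2) * Ln) v (1 - t) htv h2w hcase.le
    have hid : Real.exp (-v) * v ^ 2 * Real.exp (t * v) = v ^ 2 * Real.exp (-((1 - t) * v)) := by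
      rw [show Real.exp (-v) * v ^ 2 * Real.exp (t * v)
          = v ^ 2 * (Real.exp (-v) * Real.exp (t * v)) from by ring, ← Real.exp_add]
      congr 2; ring
    have hid2 : ((5/2) * Ln) ^ 2 * Real.exp (-((1 - t) * ((5/2) * Ln)))
        = (25/4) * Ln ^ 2 * Real.exp (t * ((5/2) * Ln)) * Real.exp (-((5/2) * Ln)) := by
      rw [show (25/4) * Ln ^ 2 * Real.exp (t * ((5/2) * Ln)) * Real.exp (-((5/2) * Ln))
          = (25/4) * Ln ^ 2 * (Real.exp (t * ((5/2) * Ln)) * Real.exp (-((5/2) * Ln))) from by ring,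
        ← Real.exp_add]
      rw [show (5/2 * Ln) ^ 2 = 25/4 * Ln ^ 2 from by ring]
      congr 2; ring
    have hetw : Real.exp (t * ((5/2) * Ln)) ≤ 8/7 := by
      calc Real.exp (t * ((5/2) * Ln)) ≤ Real.exp (1/8) := by
            apply Real.exp_le_exp.mpr; nlinarith
      _ ≤ 8/7 := hexp18
    have hL : (0:ℝ) ≤ (50/7) * Ln ^ 2 * Real.exp (-v) := by positivity
    have hfin : (25/4) * Ln ^ 2 * Real.exp (t * ((5/2) * Ln)) * Real.exp (-((5/2) * Ln))
        ≤ (50/7) * Ln ^ 2 * Real.exp (-((5/2) * Ln)) := by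
      have h1 : (25/4) * Ln ^ 2 * Real.exp (t * ((5/2) * Ln)) ≤ (25/4) * Ln ^ 2 * (8/7) :=
        mul_le_mul_of_nonneg_left hetw (by positivity)
      have := mul_le_mul_of_nonneg_right h1 (Real.exp_pos (-((5/2) * Ln))).le
      linarith
    calc Real.exp (-v) * v ^ 2 * Real.exp (t * v) = v ^ 2 * Real.exp (-((1 - t) * v)) := hid
    _ ≤ ((5/2) * Ln) ^ 2 * Real.exp (-((1 - t) * ((5/2) * Ln))) := hmono
    _ = (25/4) * Ln ^ 2 * Real.exp (t * ((5/2) * Ln)) * Real.exp (-((5/2) * Ln)) := hid2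
    _ ≤ (50/7) * Ln ^ 2 * Real.exp (-((5/2) * Ln)) := hfin
    _ ≤ _ := by linarith

section SingleLetter
variable {Y : Type*} [Fintype Y] (p : Y → ℝ) (Ln t : ℝ)

/-- Bound on the weighted second moment of `log(1/p)`. -/
lemma aux_M_bound (h0 : ∀ y, 0 ≤ p y) (h1 : ∑ y, p y = 1)
    (hLn : 1 ≤ Ln) (hcard : (Fintype.card Y : ℝ) ≤ Real.exp Ln)
    (ht0 : 0 < t) (htL : t * Ln ≤ 1 / 20) :
    ∑ y, p y * (Real.log (p y)) ^ 2 * Real.exp (t * (-Real.log (p y))) ≤ 10 * Ln ^ 2 := by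
  have hLn0 : 0 < Ln := by linarith
  have hq1 : ∀ y, p y ≤ 1 := by
    intro y
    calc p y ≤ ∑ z, p z := Finset.single_le_sum (fun z _ => h0 z) (Finset.mem_univ y)
    _ = 1 := h1
  have hterm : ∀ y, p y * (Real.log (p y)) ^ 2 * Real.exp (t * (-Real.log (p y)))
      ≤ (50/7) * Ln ^ 2 * p y + (50/7) * Ln ^ 2 * Real.exp (-((5/2) * Ln)) := by
    intro y
    rcases eq_or_lt_of_le (h0 y) with h | hqpos
    · rw [← h]
      simp only [Real.log_zero, zero_mul, mul_zero, ne_eq, OfNat.ofNat_ne_zero,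
        not_false_eq_true, zero_pow]
      positivity
    · have hv0 : 0 ≤ -Real.log (p y) := by
        have := Real.log_nonpos (h0 y) (hq1 y)
        linarith
      have hqe : p y = Real.exp (-(-Real.log (p y))) := by
        rw [neg_neg, Real.exp_log hqpos]
      have := aux_term (-Real.log (p y)) t Ln hv0 hLn ht0 htL
      rw [neg_neg, Real.exp_log hqpos] at this
      calc p y * (Real.log (p y)) ^ 2 * Real.exp (t * (-Real.log (p y)))
          = p y * (-Real.log (p y)) ^ 2 * Real.exp (t * (-Real.log (p y))) := by ring
      _ ≤ (50/7) * Ln ^ 2 * p y + (50/7) * Ln ^ 2 * Real.exp (-((5/2) * Ln)) := this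
  have hcard2 : (Fintype.card Y : ℝ) * Real.exp (-((5/2) * Ln)) ≤ 1/4 := by
    have h1' : (Fintype.card Y : ℝ) * Real.exp (-((5/2) * Ln))
        ≤ Real.exp Ln * Real.exp (-((5/2) * Ln)) :=
      mul_le_mul_of_nonneg_right hcard (Real.exp_pos _).le
    have h2' : Real.exp Ln * Real.exp (-((5/2) * Ln)) = Real.exp (-((3/2) * Ln)) := by
      rw [← Real.exp_add]; congr 1; ring
    have h3' : Real.exp (-((3/2) * Ln)) ≤ Real.exp (-(3/2 : ℝ)) := by
      apply Real.exp_le_exp.mpr; nlinarith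
    have h4' : Real.exp (-(3/2 : ℝ)) ≤ 1/4 := by
      rw [Real.exp_neg, inv_le_comm₀ (Real.exp_pos _) (by norm_num)]
      have hsplit : Real.exp (3/2 : ℝ) = Real.exp 1 * Real.exp (1/2) := by
        rw [← Real.exp_add]; norm_num
      nlinarith [Real.exp_one_gt_d9, Real.add_one_le_exp (1/2 : ℝ), Real.exp_pos (1/2 : ℝ),
        Real.exp_pos (1:ℝ)]
    linarith
  calc ∑ y, p y * (Real.log (p y)) ^ 2 * Real.exp (t * (-Real.log (p y)))
      ≤ ∑ y, ((50/7) * Ln ^ 2 * p y + (50/7) * Ln ^ 2 * Real.exp (-((5/2) * Ln))) :=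
        Finset.sum_le_sum (fun y _ => hterm y)
  _ = (50/7) * Ln ^ 2 * (∑ y, p y)
      + (Fintype.card Y : ℝ) * ((50/7) * Ln ^ 2 * Real.exp (-((5/2) * Ln))) := by
        rw [Finset.sum_add_distrib, ← Finset.mul_sum, Finset.sum_const, Finset.card_univ,
          nsmul_eq_mul]
  _ ≤ 10 * Ln ^ 2 := by
        rw [h1]
        have := mul_le_mul_of_nonneg_left hcard2 (by positivity : (0:ℝ) ≤ (50/7) * Ln ^ 2)
        nlinarith [sq_nonneg Ln]

end SingleLetter

section SingleLetter
variable {Y : Type*} [Fintype Y] (p : Y → ℝ) (Ln t : ℝ)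

lemma aux_ptA (q v t : ℝ) (hq : 0 ≤ q) (hv : 0 ≤ v) (ht : 0 ≤ t) :
    q * Real.exp (t * v) ≤ q + t * (q * v) + t ^ 2 * (q * v ^ 2 * Real.exp (t * v)) := by
  have h1 : Real.exp (t * v) ≤ 1 + (t * v) * Real.exp (t * v) := by
    have := aux_exp_sub_one_le (t * v); linarith
  have hA := mul_le_mul_of_nonneg_left h1 hq
  have hB := mul_le_mul_of_nonneg_left h1 (mul_nonneg (mul_nonneg ht hq) hv)
  nlinarith [Real.exp_pos (t * v)]

lemma aux_keyA (h0 : ∀ y, 0 ≤ p y) (h1 : ∑ y, p y = 1)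
    (hLn : 1 ≤ Ln) (hcard : (Fintype.card Y : ℝ) ≤ Real.exp Ln)
    (ht0 : 0 < t) (htL : t * Ln ≤ 1 / 20) :
    ∑ y, (p y) ^ ((1:ℝ) - t)
      ≤ Real.exp (t * (-∑ y, p y * Real.log (p y)) + 10 * t ^ 2 * Ln ^ 2) := by
  have hLn0 : 0 < Ln := by linarith
  have ht20 : t ≤ 1 / 20 := by nlinarith
  have hq1 : ∀ y, p y ≤ 1 := fun y => by
    calc p y ≤ ∑ z, p z := Finset.single_le_sum (fun z _ => h0 z) (Finset.mem_univ y)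
    _ = 1 := h1
  have hpt : ∀ y, (p y) ^ ((1:ℝ) - t)
      ≤ p y + t * (p y * (-Real.log (p y)))
        + t ^ 2 * (p y * (Real.log (p y)) ^ 2 * Real.exp (t * (-Real.log (p y)))) := by
    intro y
    rcases eq_or_lt_of_le (h0 y) with h | hqpos
    · rw [← h, Real.zero_rpow (by norm_num; linarith : (1:ℝ) - t ≠ 0)]
      simp [Real.log_zero]
    · have hid : (p y) ^ ((1:ℝ) - t) = p y * Real.exp (t * (-Real.log (p y))) := by
        rw [Real.rpow_def_of_pos hqpos]
        rw [show Real.log (p y) * (1 - t) = Real.log (p y) + t * (-Real.log (p y)) from by ring,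
          Real.exp_add, Real.exp_log hqpos]
      rw [hid]
      have hv : 0 ≤ -Real.log (p y) := by
        have := Real.log_nonpos (h0 y) (hq1 y); linarith
      have := aux_ptA (p y) (-Real.log (p y)) t (h0 y) hv ht0.le
      calc p y * Real.exp (t * (-Real.log (p y)))
          ≤ p y + t * (p y * (-Real.log (p y)))
            + t ^ 2 * (p y * (-Real.log (p y)) ^ 2 * Real.exp (t * (-Real.log (p y)))) := this
      _ = _ := by ring
  have hM := aux_M_bound p Ln t h0 h1 hLn hcard ht0 htL
  calc ∑ y, (p y) ^ ((1:ℝ) - t)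
      ≤ ∑ y, (p y + t * (p y * (-Real.log (p y)))
        + t ^ 2 * (p y * (Real.log (p y)) ^ 2 * Real.exp (t * (-Real.log (p y))))) :=
        Finset.sum_le_sum fun y _ => hpt y
  _ = 1 + t * (-∑ y, p y * Real.log (p y))
        + t ^ 2 * ∑ y, p y * (Real.log (p y)) ^ 2 * Real.exp (t * (-Real.log (p y))) := by
      have hneg : ∑ y, p y * -Real.log (p y) = -∑ y, p y * Real.log (p y) := by
        rw [← Finset.sum_neg_distrib]
        exact Finset.sum_congr rfl fun y _ => by ring
      rw [Finset.sum_add_distrib, Finset.sum_add_distrib, ← Finset.mul_sum, ← Finset.mul_sum, h1,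
        hneg]
  _ ≤ 1 + (t * (-∑ y, p y * Real.log (p y)) + 10 * t ^ 2 * Ln ^ 2) := by
      nlinarith [sq_nonneg t]
  _ ≤ Real.exp (t * (-∑ y, p y * Real.log (p y)) + 10 * t ^ 2 * Ln ^ 2) := by
      have := Real.add_one_le_exp (t * (-∑ y, p y * Real.log (p y)) + 10 * t ^ 2 * Ln ^ 2)
      linarith

lemma aux_keyB (h0 : ∀ y, 0 ≤ p y) (h1 : ∑ y, p y = 1)
    (hLn : 1 ≤ Ln) (hcard : (Fintype.card Y : ℝ) ≤ Real.exp Ln)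
    (ht0 : 0 < t) (htL : t * Ln ≤ 1 / 20) :
    ∑ y, (p y) ^ ((1:ℝ) + t)
      ≤ Real.exp (-(t * (-∑ y, p y * Real.log (p y))) + 10 * t ^ 2 * Ln ^ 2) := by
  have hLn0 : 0 < Ln := by linarith
  have hq1 : ∀ y, p y ≤ 1 := fun y => by
    calc p y ≤ ∑ z, p z := Finset.single_le_sum (fun z _ => h0 z) (Finset.mem_univ y)
    _ = 1 := h1
  have hpt : ∀ y, (p y) ^ ((1:ℝ) + t)
      ≤ p y - t * (p y * (-Real.log (p y)))
        + t ^ 2 * (p y * (Real.log (p y)) ^ 2) := by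
    intro y
    rcases eq_or_lt_of_le (h0 y) with h | hqpos
    · rw [← h, Real.zero_rpow (by positivity : (1:ℝ) + t ≠ 0)]
      simp [Real.log_zero]
    · have hid : (p y) ^ ((1:ℝ) + t) = p y * Real.exp (-(t * (-Real.log (p y)))) := by
        rw [Real.rpow_def_of_pos hqpos]
        rw [show Real.log (p y) * (1 + t) = Real.log (p y) + -(t * (-Real.log (p y))) from by ring,
          Real.exp_add, Real.exp_log hqpos]
      rw [hid]
      have hv : 0 ≤ -Real.log (p y) := by
        have := Real.log_nonpos (h0 y) (hq1 y); linarith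
      have ha : 0 ≤ t * (-Real.log (p y)) := mul_nonneg ht0.le hv
      have he := aux_exp_neg_le (t * (-Real.log (p y))) ha
      have := mul_le_mul_of_nonneg_left he (h0 y)
      calc p y * Real.exp (-(t * (-Real.log (p y))))
          ≤ p y * (1 - t * (-Real.log (p y)) + (t * (-Real.log (p y))) ^ 2) := this
      _ = _ := by ring
  have hM := aux_M_bound p Ln t h0 h1 hLn hcard ht0 htL
  have hM0 : ∑ y, p y * (Real.log (p y)) ^ 2 ≤ 10 * Ln ^ 2 := by
    refine le_trans (Finset.sum_le_sum fun y _ => ?_) hM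
    have h1e : 1 ≤ Real.exp (t * (-Real.log (p y))) := by
      rw [Real.one_le_exp_iff]
      exact mul_nonneg ht0.le (by
        have := Real.log_nonpos (h0 y) (hq1 y); linarith)
    nlinarith [mul_nonneg (h0 y) (sq_nonneg (Real.log (p y)))]
  calc ∑ y, (p y) ^ ((1:ℝ) + t)
      ≤ ∑ y, (p y - t * (p y * (-Real.log (p y))) + t ^ 2 * (p y * (Real.log (p y)) ^ 2)) :=
        Finset.sum_le_sum fun y _ => hpt y
  _ = 1 - t * (-∑ y, p y * Real.log (p y))
        + t ^ 2 * ∑ y, p y * (Real.log (p y)) ^ 2 := by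
      have hneg : ∑ y, p y * -Real.log (p y) = -∑ y, p y * Real.log (p y) := by
        rw [← Finset.sum_neg_distrib]
        exact Finset.sum_congr rfl fun y _ => by ring
      rw [Finset.sum_add_distrib, Finset.sum_sub_distrib, ← Finset.mul_sum, ← Finset.mul_sum, h1,
        hneg]
  _ ≤ 1 + (-(t * (-∑ y, p y * Real.log (p y))) + 10 * t ^ 2 * Ln ^ 2) := by
      nlinarith [sq_nonneg t]
  _ ≤ _ := by
      have := Real.add_one_le_exp (-(t * (-∑ y, p y * Real.log (p y))) + 10 * t ^ 2 * Ln ^ 2)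
      linarith
end SingleLetter


set_option maxHeartbeats 2000000 in

/-- Unit-probability bound for the entropy typical set (Lemma 1 of the paper). -/
theorem stmt0 {X Y : Type*} [Fintype Y] (W : X → Y → ℝ) (hW : ∀ x, IsDist (W x))
    (n : ℕ) (hn : 1 ≤ n) (δ : ℝ) (hδ0 : 0 < δ)
    (hδ : δ ≤ Real.sqrt n * Real.logb 2 (Fintype.card Y))
    (u : Fin n → X) :
    1 - 2 * (2 : ℝ) ^ (-δ ^ 2 / (36 * Kf (Fintype.card Y))) ≤ probOf W u (typSet W u δ) := by
  classical
  set d := Fintype.card Y with hd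
  set Ln : ℝ := Real.log (max d 3 : ℕ) with hLndef
  have hm3 : (3:ℕ) ≤ max d 3 := le_max_right _ _
  have hmR : (3:ℝ) ≤ ((max d 3 : ℕ) : ℝ) := by exact_mod_cast hm3
  have hdm : (d:ℝ) ≤ ((max d 3 : ℕ) : ℝ) := by exact_mod_cast le_max_left d 3
  have hlog2pos : (0:ℝ) < Real.log 2 := Real.log_pos (by norm_num)
  have hlog2lt : Real.log 2 < 0.6931471808 := Real.log_two_lt_d9
  have hLn1 : 1 ≤ Ln := by
    have h3 : (1:ℝ) < Real.log 3 := by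
      rw [Real.lt_log_iff_exp_lt (by norm_num : (0:ℝ) < 3)]
      have := Real.exp_one_lt_d9
      norm_num at this ⊢
      linarith
    have hle : Real.log 3 ≤ Ln := Real.log_le_log (by norm_num) hmR
    linarith
  have hLn0 : 0 < Ln := by linarith
  have hx0 : (0:ℕ) < n := hn
  have hd1 : 1 ≤ d := by
    rcases Nat.eq_zero_or_pos d with h | h
    · exfalso
      have hYe : IsEmpty Y := Fintype.card_eq_zero_iff.mp h
      have h2 := (hW (u ⟨0, hx0⟩)).2
      rw [Finset.univ_eq_empty, Finset.sum_empty] at h2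
      norm_num at h2
    · exact h
  have hdR : (1:ℝ) ≤ (d:ℝ) := by exact_mod_cast hd1
  have hcardle : (d:ℝ) ≤ Real.exp Ln := by
    rw [hLndef, Real.exp_log (by linarith : (0:ℝ) < ((max d 3 : ℕ):ℝ))]
    exact hdm
  have hlogdLn : Real.log d ≤ Ln := Real.log_le_log (by linarith) hdm
  set s : ℝ := Real.sqrt n with hs
  have hs0 : 0 < s := Real.sqrt_pos.mpr (by exact_mod_cast hx0)
  have hs2 : s ^ 2 = (n:ℝ) := Real.sq_sqrt (by positivity)
  set t : ℝ := δ * Real.log 2 / (20 * s * Ln ^ 2) with ht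
  have ht0 : 0 < t := by
    apply div_pos (mul_pos hδ0 hlog2pos)
    positivity
  have hδs : δ * Real.log 2 ≤ s * Ln := by
    have hlogb : Real.logb 2 (d:ℝ) ≤ Ln / Real.log 2 := by
      rw [Real.logb]
      exact div_le_div_of_nonneg_right hlogdLn hlog2pos.le
    have h1 : δ ≤ s * (Ln / Real.log 2) := by
      calc δ ≤ s * Real.logb 2 (d:ℝ) := hδ
      _ ≤ s * (Ln / Real.log 2) := mul_le_mul_of_nonneg_left hlogb hs0.le
    have h2 : s * (Ln / Real.log 2) * Real.log 2 = s * Ln := by field_simp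
    nlinarith
  have htL : t * Ln ≤ 1 / 20 := by
    have hteq : t * Ln = δ * Real.log 2 / (20 * s * Ln) := by
      rw [ht]; field_simp
    rw [hteq, div_le_iff₀ (by positivity)]
    nlinarith
  -- per letter
  have h0 : ∀ i y, 0 ≤ W (u i) y := fun i => (hW (u i)).1
  have h1 : ∀ i, ∑ y, W (u i) y = 1 := fun i => (hW (u i)).2
  have hP0 : ∀ y, 0 ≤ prodP W u y := fun y => Finset.prod_nonneg (fun i _ => h0 i (y i))
  -- total mass one
  have hsum1 : ∑ y : Fin n → Y, prodP W u y = 1 := by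
    have hps := Finset.prod_univ_sum (fun _ : Fin n => (Finset.univ : Finset Y))
      (fun i y => W (u i) y)
    rw [Fintype.piFinset_univ] at hps
    calc ∑ y : Fin n → Y, prodP W u y = ∑ y : Fin n → Y, ∏ i, W (u i) (y i) := rfl
    _ = ∏ i : Fin n, ∑ j, W (u i) j := hps.symm
    _ = 1 := by simp [h1]
  -- MGF sum-product identity
  have hSn : ∀ a : ℝ, ∑ y : Fin n → Y, (prodP W u y) ^ a = ∏ i, ∑ j, (W (u i) j) ^ a := by
    intro a
    have hps := Finset.prod_univ_sum (fun _ : Fin n => (Finset.univ : Finset Y))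
      (fun i y => (W (u i) y) ^ a)
    rw [Fintype.piFinset_univ] at hps
    rw [hps]
    exact Finset.sum_congr rfl fun y _ =>
      (Real.finset_prod_rpow Finset.univ _ (fun i _ => h0 i (y i)) a).symm
  -- entropy conversion
  have hent : ∀ i : Fin n, -∑ y, W (u i) y * Real.log (W (u i) y)
      = Real.log 2 * H2 (W (u i)) := by
    intro i
    rw [H2, mul_neg, Finset.mul_sum, neg_inj]
    refine Finset.sum_congr rfl fun y _ => ?_
    rw [Real.logb]
    field_simp
  have hHn : ∑ i : Fin n, (-∑ y, W (u i) y * Real.log (W (u i) y))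
      = Real.log 2 * Hn W u := by
    rw [Hn, Finset.mul_sum]
    exact Finset.sum_congr rfl fun i _ => hent i
  -- product MGF bounds
  have hprodA : ∑ y : Fin n → Y, (prodP W u y) ^ ((1:ℝ) - t)
      ≤ Real.exp (t * (Real.log 2 * Hn W u) + (n:ℝ) * (10 * t ^ 2 * Ln ^ 2)) := by
    rw [hSn]
    calc ∏ i : Fin n, ∑ j, (W (u i) j) ^ ((1:ℝ) - t)
        ≤ ∏ i : Fin n, Real.exp (t * (-∑ y, W (u i) y * Real.log (W (u i) y))
            + 10 * t ^ 2 * Ln ^ 2) := by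
          apply Finset.prod_le_prod
          · intro i _
            exact Finset.sum_nonneg fun y _ => Real.rpow_nonneg (h0 i y) _
          · intro i _
            exact aux_keyA (W (u i)) Ln t (h0 i) (h1 i) hLn1 hcardle ht0 htL
    _ = Real.exp (∑ i : Fin n, (t * (-∑ y, W (u i) y * Real.log (W (u i) y))
            + 10 * t ^ 2 * Ln ^ 2)) := (Real.exp_sum _ _).symm
    _ = _ := by
          rw [Finset.sum_add_distrib, ← Finset.mul_sum, hHn, Finset.sum_const,
            Finset.card_univ, Fintype.card_fin, nsmul_eq_mul]
  have hprodB : ∑ y : Fin n → Y, (prodP W u y) ^ ((1:ℝ) + t)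
      ≤ Real.exp (-(t * (Real.log 2 * Hn W u)) + (n:ℝ) * (10 * t ^ 2 * Ln ^ 2)) := by
    rw [hSn]
    calc ∏ i : Fin n, ∑ j, (W (u i) j) ^ ((1:ℝ) + t)
        ≤ ∏ i : Fin n, Real.exp (-(t * (-∑ y, W (u i) y * Real.log (W (u i) y)))
            + 10 * t ^ 2 * Ln ^ 2) := by
          apply Finset.prod_le_prod
          · intro i _
            exact Finset.sum_nonneg fun y _ => Real.rpow_nonneg (h0 i y) _
          · intro i _
            exact aux_keyB (W (u i)) Ln t (h0 i) (h1 i) hLn1 hcardle ht0 htL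
    _ = Real.exp (∑ i : Fin n, (-(t * (-∑ y, W (u i) y * Real.log (W (u i) y)))
            + 10 * t ^ 2 * Ln ^ 2)) := (Real.exp_sum _ _).symm
    _ = _ := by
          rw [Finset.sum_add_distrib, Finset.sum_neg_distrib, ← Finset.mul_sum, hHn,
            Finset.sum_const, Finset.card_univ, Fintype.card_fin, nsmul_eq_mul]
  have ht1 : t < 1 := by nlinarith
  have hsne : s ≠ 0 := ne_of_gt hs0
  have hLnne : Ln ≠ 0 := ne_of_gt hLn0
  have hlog2ne : Real.log 2 ≠ 0 := ne_of_gt hlog2pos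
  clear_value d Ln s t
  set Bp := Finset.univ.filter
      (fun y : Fin n → Y => δ * s < Real.logb 2 (prodP W u y) + Hn W u) with hBpd
  set Bm := Finset.univ.filter
      (fun y : Fin n → Y => Real.logb 2 (prodP W u y) + Hn W u < -(δ * s)) with hBmd
  set bad := Finset.univ.filter (fun y : Fin n → Y =>
      ¬(0 < prodP W u y ∧ |Real.logb 2 (prodP W u y) + Hn W u| ≤ δ * s)) with hbadd
  -- upper tail
  have hBp : ∑ y ∈ Bp, prodP W u y
      ≤ Real.exp (-(t * (δ * s) * Real.log 2) + (n:ℝ) * (10 * t ^ 2 * Ln ^ 2)) := by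
    have hpt : ∀ y ∈ Bp, prodP W u y ≤ (prodP W u y) ^ ((1:ℝ) + t)
          * Real.exp (-(t * ((δ * s - Hn W u) * Real.log 2))) := by
      intro y hy
      rcases eq_or_lt_of_le (hP0 y) with h | hpos
      · rw [← h, Real.zero_rpow (ne_of_gt (by linarith : (0:ℝ) < 1 + t)), zero_mul]
      · have hmem := (Finset.mem_filter.mp hy).2
        have e1 : Real.logb 2 (prodP W u y) * Real.log 2 = Real.log (prodP W u y) := by
          rw [Real.logb]; field_simp
        have hlog : (δ * s - Hn W u) * Real.log 2 < Real.log (prodP W u y) := by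
          have h2 : δ * s - Hn W u < Real.logb 2 (prodP W u y) := by linarith
          have h3 := mul_lt_mul_of_pos_right h2 hlog2pos
          rw [e1] at h3; exact h3
        have hexps : 0 ≤ t * Real.log (prodP W u y)
            - t * ((δ * s - Hn W u) * Real.log 2) := by
          have := mul_le_mul_of_nonneg_left hlog.le ht0.le
          linarith
        have hid : (prodP W u y) ^ ((1:ℝ) + t)
            * Real.exp (-(t * ((δ * s - Hn W u) * Real.log 2)))
            = prodP W u y * Real.exp (t * Real.log (prodP W u y)
                - t * ((δ * s - Hn W u) * Real.log 2)) := by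
          rw [Real.rpow_def_of_pos hpos, ← Real.exp_add,
            show Real.log (prodP W u y) * (1 + t) + -(t * ((δ * s - Hn W u) * Real.log 2))
              = Real.log (prodP W u y) + (t * Real.log (prodP W u y)
                - t * ((δ * s - Hn W u) * Real.log 2)) from by ring,
            Real.exp_add, Real.exp_log hpos]
        calc prodP W u y = prodP W u y * 1 := (mul_one _).symm
        _ ≤ prodP W u y * Real.exp (t * Real.log (prodP W u y)
              - t * ((δ * s - Hn W u) * Real.log 2)) :=
            mul_le_mul_of_nonneg_left (Real.one_le_exp hexps) hpos.le
        _ = _ := hid.symm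
    calc ∑ y ∈ Bp, prodP W u y
        ≤ ∑ y ∈ Bp, (prodP W u y) ^ ((1:ℝ) + t)
            * Real.exp (-(t * ((δ * s - Hn W u) * Real.log 2))) := Finset.sum_le_sum hpt
    _ = (∑ y ∈ Bp, (prodP W u y) ^ ((1:ℝ) + t))
          * Real.exp (-(t * ((δ * s - Hn W u) * Real.log 2))) := by rw [← Finset.sum_mul]
    _ ≤ (∑ y : Fin n → Y, (prodP W u y) ^ ((1:ℝ) + t))
          * Real.exp (-(t * ((δ * s - Hn W u) * Real.log 2))) := by
          apply mul_le_mul_of_nonneg_right _ (Real.exp_pos _).le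
          exact Finset.sum_le_sum_of_subset_of_nonneg (Finset.subset_univ _)
            (fun y _ _ => Real.rpow_nonneg (hP0 y) _)
    _ ≤ Real.exp (-(t * (Real.log 2 * Hn W u)) + (n:ℝ) * (10 * t ^ 2 * Ln ^ 2))
          * Real.exp (-(t * ((δ * s - Hn W u) * Real.log 2))) :=
          mul_le_mul_of_nonneg_right hprodB (Real.exp_pos _).le
    _ = Real.exp (-(t * (δ * s) * Real.log 2) + (n:ℝ) * (10 * t ^ 2 * Ln ^ 2)) := by
          rw [← Real.exp_add]; congr 1; ring
  -- lower tail
  have hBm : ∑ y ∈ Bm, prodP W u y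
      ≤ Real.exp (-(t * (δ * s) * Real.log 2) + (n:ℝ) * (10 * t ^ 2 * Ln ^ 2)) := by
    have hpt : ∀ y ∈ Bm, prodP W u y ≤ (prodP W u y) ^ ((1:ℝ) - t)
          * Real.exp (t * ((-Hn W u - δ * s) * Real.log 2)) := by
      intro y hy
      rcases eq_or_lt_of_le (hP0 y) with h | hpos
      · rw [← h, Real.zero_rpow (ne_of_gt (by linarith : (0:ℝ) < 1 - t)), zero_mul]
      · have hmem := (Finset.mem_filter.mp hy).2
        have e1 : Real.logb 2 (prodP W u y) * Real.log 2 = Real.log (prodP W u y) := by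
          rw [Real.logb]; field_simp
        have hlog : Real.log (prodP W u y) < (-Hn W u - δ * s) * Real.log 2 := by
          have h2 : Real.logb 2 (prodP W u y) < -Hn W u - δ * s := by linarith
          have h3 := mul_lt_mul_of_pos_right h2 hlog2pos
          rw [e1] at h3; exact h3
        have hexps : 0 ≤ t * ((-Hn W u - δ * s) * Real.log 2)
            - t * Real.log (prodP W u y) := by
          have := mul_le_mul_of_nonneg_left hlog.le ht0.le
          linarith
        have hid : (prodP W u y) ^ ((1:ℝ) - t)
            * Real.exp (t * ((-Hn W u - δ * s) * Real.log 2))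
            = prodP W u y * Real.exp (t * ((-Hn W u - δ * s) * Real.log 2)
                - t * Real.log (prodP W u y)) := by
          rw [Real.rpow_def_of_pos hpos, ← Real.exp_add,
            show Real.log (prodP W u y) * (1 - t) + t * ((-Hn W u - δ * s) * Real.log 2)
              = Real.log (prodP W u y) + (t * ((-Hn W u - δ * s) * Real.log 2)
                - t * Real.log (prodP W u y)) from by ring,
            Real.exp_add, Real.exp_log hpos]
        calc prodP W u y = prodP W u y * 1 := (mul_one _).symm
        _ ≤ prodP W u y * Real.exp (t * ((-Hn W u - δ * s) * Real.log 2)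
              - t * Real.log (prodP W u y)) :=
            mul_le_mul_of_nonneg_left (Real.one_le_exp hexps) hpos.le
        _ = _ := hid.symm
    calc ∑ y ∈ Bm, prodP W u y
        ≤ ∑ y ∈ Bm, (prodP W u y) ^ ((1:ℝ) - t)
            * Real.exp (t * ((-Hn W u - δ * s) * Real.log 2)) := Finset.sum_le_sum hpt
    _ = (∑ y ∈ Bm, (prodP W u y) ^ ((1:ℝ) - t))
          * Real.exp (t * ((-Hn W u - δ * s) * Real.log 2)) := by rw [← Finset.sum_mul]
    _ ≤ (∑ y : Fin n → Y, (prodP W u y) ^ ((1:ℝ) - t))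
          * Real.exp (t * ((-Hn W u - δ * s) * Real.log 2)) := by
          apply mul_le_mul_of_nonneg_right _ (Real.exp_pos _).le
          exact Finset.sum_le_sum_of_subset_of_nonneg (Finset.subset_univ _)
            (fun y _ _ => Real.rpow_nonneg (hP0 y) _)
    _ ≤ Real.exp (t * (Real.log 2 * Hn W u) + (n:ℝ) * (10 * t ^ 2 * Ln ^ 2))
          * Real.exp (t * ((-Hn W u - δ * s) * Real.log 2)) :=
          mul_le_mul_of_nonneg_right hprodA (Real.exp_pos _).le
    _ = Real.exp (-(t * (δ * s) * Real.log 2) + (n:ℝ) * (10 * t ^ 2 * Ln ^ 2)) := by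
          rw [← Real.exp_add]; congr 1; ring
  -- decomposition
  have hsplit : probOf W u (typSet W u δ) = 1 - ∑ y ∈ bad, prodP W u y := by
    have hba := Finset.sum_filter_add_sum_filter_not Finset.univ
      (fun y : Fin n → Y =>
        0 < prodP W u y ∧ |Real.logb 2 (prodP W u y) + Hn W u| ≤ δ * s) (prodP W u)
    rw [hsum1] at hba
    have he : probOf W u (typSet W u δ)
        = ∑ y ∈ Finset.univ.filter (fun y : Fin n → Y =>
            0 < prodP W u y ∧ |Real.logb 2 (prodP W u y) + Hn W u| ≤ δ * s),
            prodP W u y := by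
      unfold probOf typSet
      rw [hs]
    rw [he, hbadd]
    linarith
  -- bad set is contained in the two tails
  have hsub : ∑ y ∈ bad, prodP W u y
      ≤ (∑ y ∈ Bp, prodP W u y) + ∑ y ∈ Bm, prodP W u y := by
    have hstep1 : ∑ y ∈ bad, prodP W u y
        = ∑ y ∈ bad.filter (fun y => 0 < prodP W u y), prodP W u y := by
      refine (Finset.sum_subset (Finset.filter_subset _ _) ?_).symm
      intro y hy hny
      have hnp : ¬ (0 < prodP W u y) := fun hc => hny (Finset.mem_filter.mpr ⟨hy, hc⟩)
      linarith [hP0 y, not_lt.mp hnp]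
    have hstep2 : bad.filter (fun y => 0 < prodP W u y) ⊆ Bp ∪ Bm := by
      intro y hy
      obtain ⟨hyb, hyp⟩ := Finset.mem_filter.mp hy
      have hnc := (Finset.mem_filter.mp hyb).2
      have habs : δ * s < |Real.logb 2 (prodP W u y) + Hn W u| := by
        by_contra hno
        exact hnc ⟨hyp, not_lt.mp hno⟩
      rcases lt_abs.mp habs with h | h
      · exact Finset.mem_union_left _ (Finset.mem_filter.mpr ⟨Finset.mem_univ _, h⟩)
      · refine Finset.mem_union_right _ (Finset.mem_filter.mpr ⟨Finset.mem_univ _, ?_⟩)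
        linarith
    have hstep3 := Finset.sum_union_inter (s₁ := Bp) (s₂ := Bm) (f := prodP W u)
    have hinter : 0 ≤ ∑ y ∈ Bp ∩ Bm, prodP W u y :=
      Finset.sum_nonneg fun y _ => hP0 y
    have hstep4 : ∑ y ∈ bad.filter (fun y => 0 < prodP W u y), prodP W u y
        ≤ ∑ y ∈ Bp ∪ Bm, prodP W u y :=
      Finset.sum_le_sum_of_subset_of_nonneg hstep2 (fun y _ _ => hP0 y)
    rw [hstep1]
    linarith
  -- final numeric comparison
  have hKf : Kf d = Ln ^ 2 / (Real.log 2) ^ 2 := by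
    rw [Kf, Real.logb, div_pow, ← hLndef]
  have h36 : 40 * Real.log 2 ≤ 36 := by linarith
  have hfinal : Real.exp (-(t * (δ * s) * Real.log 2) + (n:ℝ) * (10 * t ^ 2 * Ln ^ 2))
      ≤ (2:ℝ) ^ (-δ ^ 2 / (36 * Kf d)) := by
    rw [Real.rpow_def_of_pos (by norm_num : (0:ℝ) < 2)]
    apply Real.exp_le_exp.mpr
    have hL : -(t * (δ * s) * Real.log 2) + (n:ℝ) * (10 * t ^ 2 * Ln ^ 2)
        = -(δ ^ 2 * (Real.log 2) ^ 2) / (40 * Ln ^ 2) := by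
      rw [ht, ← hs2]
      field_simp
      ring
    have hR : Real.log 2 * (-δ ^ 2 / (36 * Kf d))
        = -(δ ^ 2 * (Real.log 2) ^ 3) / (36 * Ln ^ 2) := by
      rw [hKf]
      field_simp
    rw [hL, hR, neg_div, neg_div, neg_le_neg_iff,
      div_le_div_iff₀ (by nlinarith [mul_pos hLn0 hLn0] : (0:ℝ) < 36 * Ln ^ 2)
        (by nlinarith [mul_pos hLn0 hLn0] : (0:ℝ) < 40 * Ln ^ 2)]
    have hX : 0 ≤ δ ^ 2 * (Real.log 2) ^ 2 * Ln ^ 2 := by positivity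
    nlinarith [hX, h36, hlog2pos]
  have hexppos := (Real.exp_pos (-(t * (δ * s) * Real.log 2)
    + (n:ℝ) * (10 * t ^ 2 * Ln ^ 2))).le
  rw [hsplit]
  have hband : ∑ y ∈ bad, prodP W u y ≤ 2 * (2:ℝ) ^ (-δ ^ 2 / (36 * Kf d)) := by
    calc ∑ y ∈ bad, prodP W u y ≤ (∑ y ∈ Bp, prodP W u y) + ∑ y ∈ Bm, prodP W u y := hsub
    _ ≤ 2 * (2:ℝ) ^ (-δ ^ 2 / (36 * Kf d)) := by linarith
  linarith
end

section
/- Let W be a channel with arbitrary input alphabet 𝒳 and finite output alphabet 𝒴, let n ≥ 1, let 0 < δ ≤ √n · log₂|𝒴|, and let x^n, x'^n ∈ 𝒳^n be such that 1 − ½‖W_{x^n} − W_{x'^n}‖₁ ≤ ε. Then W_{x'^n}(𝒯_{x^n}^δ) ≤ 2 · 2^{−δ²/(36·K(|𝒴|))} + ε · (1 + 2^{2δ√n} · 2^{H(W_{x^n}) − H(W_{x'^n})}), where K(d) = (log₂ max{d,3})². -/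
open Real Filter

namespace DIChannel

variable {X Y : Type*}

/-- Total variation distance `½‖p − q‖₁` between distributions on a finite set. -/
noncomputable def tvd {Z : Type*} [Fintype Z] (p q : Z → ℝ) : ℝ := (∑ z, |p z - q z|) / 2

end DIChannel

open DIChannel

section AuxLemmas

/-- Derivative computation for the quadratic bound on `exp (-x)`. -/
lemma DI_quad_deriv (t : ℝ) : HasDerivAt (fun t : ℝ => 1 - t + t ^ 2 / 2 - Real.exp (-t))
    (-1 + t + Real.exp (-t)) t := by
  have h1 : HasDerivAt (fun t : ℝ => Real.exp (-t)) (-Real.exp (-t)) t := by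
    exact ((Real.hasDerivAt_exp (-t)).comp t (hasDerivAt_neg t)).congr_deriv (by simp)
  have h2 : HasDerivAt (fun t : ℝ => 1 - t + t ^ 2 / 2) (-1 + t) t := by
    have := ((hasDerivAt_id t).const_sub 1).add ((hasDerivAt_pow 2 t).div_const 2)
    refine this.congr_deriv ?_
    push_cast
    ring
  exact (h2.sub h1).congr_deriv (by ring)

/-- `exp x ≤ 1 + x + x²/2` for `x ≤ 0`. -/
lemma DI_exp_le_quadratic {x : ℝ} (hx : x ≤ 0) :
    Real.exp x ≤ 1 + x + x ^ 2 / 2 := by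
  have hm : MonotoneOn (fun t => 1 - t + t ^ 2 / 2 - Real.exp (-t)) (Set.Ici 0) := by
    apply monotoneOn_of_deriv_nonneg (convex_Ici 0)
    · exact Continuous.continuousOn (by continuity)
    · intro t _
      exact (DI_quad_deriv t).differentiableAt.differentiableWithinAt
    · intro t ht
      rw [(DI_quad_deriv t).deriv]
      have ht0 : 0 ≤ t := le_of_lt (by simpa using ht)
      nlinarith [Real.add_one_le_exp (-t)]
  have hx' : (0:ℝ) ≤ -x := by linarith
  have := hm (Set.self_mem_Ici) hx' hx'
  simp only [neg_neg] at this
  have h0 : (1:ℝ) - 0 + 0 ^ 2 / 2 - Real.exp (-0) = 0 := by norm_num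
  rw [h0] at this
  nlinarith [this]

/-- Pointwise second-moment bound: `t log² t ≤ 9 t log² dR + 9/dR` for `0 ≤ t ≤ 1`, `dR ≥ 3`. -/
lemma DI_term_logsq_bound {t dR : ℝ} (ht0 : 0 ≤ t) (ht1 : t ≤ 1) (hd : 3 ≤ dR) :
    t * (Real.log t) ^ 2 ≤ 9 * t * (Real.log dR) ^ 2 + 9 / dR := by
  have hdR0 : 0 < dR := by linarith
  have hldR : 0 < Real.log dR := Real.log_pos (by linarith)
  rcases eq_or_lt_of_le ht0 with h0 | ht0'
  · rw [← h0]
    simp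
    positivity
  rcases le_or_gt (dR ^ (-3 : ℝ)) t with hcase | hcase
  · have hlt : Real.log (dR ^ (-3 : ℝ)) ≤ Real.log t := Real.log_le_log (by positivity) hcase
    rw [Real.log_rpow hdR0] at hlt
    have hlt2 : Real.log t ≤ 0 := Real.log_nonpos ht0 ht1
    have hsq : (Real.log t) ^ 2 ≤ (3 * Real.log dR) ^ 2 := by
      apply sq_le_sq' <;> nlinarith
    have : t * (Real.log t) ^ 2 ≤ t * (3 * Real.log dR) ^ 2 :=
      mul_le_mul_of_nonneg_left hsq ht0
    have h9 : (0:ℝ) ≤ 9 / dR := by positivity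
    nlinarith
  · have hlog : -Real.log t ≤ 3 * t ^ (-(1/3) : ℝ) := by
      have h1 : Real.log (t ^ (-(1/3) : ℝ)) ≤ t ^ (-(1/3) : ℝ) - 1 :=
        Real.log_le_sub_one_of_pos (by positivity)
      rw [Real.log_rpow ht0'] at h1
      nlinarith [Real.rpow_nonneg (le_of_lt ht0') (-(1/3) : ℝ)]
    have hlog0 : 0 ≤ -Real.log t := by
      simpa using Real.log_nonpos ht0 ht1
    have hsq : (Real.log t) ^ 2 ≤ 9 * (t ^ (-(1/3) : ℝ)) ^ 2 := by
      nlinarith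
    have hpow : (t ^ (-(1/3) : ℝ)) ^ 2 = t ^ (-(2/3) : ℝ) := by
      rw [← Real.rpow_natCast (t ^ (-(1/3) : ℝ)) 2, ← Real.rpow_mul (le_of_lt ht0')]
      norm_num
    have hmul : t * t ^ (-(2/3) : ℝ) = t ^ ((1/3) : ℝ) := by
      nth_rewrite 1 [← Real.rpow_one t]
      rw [← Real.rpow_add ht0']
      norm_num
    have hle : t ^ ((1/3) : ℝ) ≤ 1 / dR := by
      calc t ^ ((1/3) : ℝ) ≤ (dR ^ (-3 : ℝ)) ^ ((1/3) : ℝ) :=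
            Real.rpow_le_rpow ht0 (le_of_lt hcase) (by norm_num)
        _ = 1 / dR := by
            rw [← Real.rpow_mul (le_of_lt hdR0)]
            norm_num [Real.rpow_neg_one, one_div]
    have hmain : t * (Real.log t) ^ 2 ≤ 9 * (t ^ ((1/3) : ℝ)) := by
      calc t * (Real.log t) ^ 2 ≤ t * (9 * t ^ (-(2/3) : ℝ)) := by
            rw [← hpow]; exact mul_le_mul_of_nonneg_left hsq ht0
        _ = 9 * (t * t ^ (-(2/3) : ℝ)) := by ring
        _ = 9 * (t ^ ((1/3) : ℝ)) := by rw [hmul]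
    have h2 : 9 * (t ^ ((1/3) : ℝ)) ≤ 9 / dR := by
      rw [div_eq_mul_one_div 9 dR]
      nlinarith
    nlinarith [mul_nonneg (mul_nonneg (by norm_num : (0:ℝ) ≤ 9) ht0) (sq_nonneg (Real.log dR))]

variable {Y : Type*} [Fintype Y]

lemma DI_mgf_term {t s : ℝ} (ht0 : 0 ≤ t) (ht1 : t ≤ 1) (hs : 0 ≤ s) :
    t ^ ((1:ℝ) + s) ≤ t + s * (t * Real.log t) + s ^ 2 / 2 * (t * (Real.log t) ^ 2) := by
  rcases eq_or_lt_of_le ht0 with h0 | ht0'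
  · rw [← h0]
    rw [Real.zero_rpow (by positivity)]
    simp
  have hlog : Real.log t ≤ 0 := Real.log_nonpos ht0 ht1
  have h1 : t ^ ((1:ℝ) + s) = t * Real.exp (s * Real.log t) := by
    rw [Real.rpow_def_of_pos ht0']
    rw [mul_add, mul_one, Real.exp_add, Real.exp_log ht0']
    ring_nf
  rw [h1]
  have hq : Real.exp (s * Real.log t) ≤ 1 + s * Real.log t + (s * Real.log t) ^ 2 / 2 :=
    DI_exp_le_quadratic (by nlinarith)
  calc t * Real.exp (s * Real.log t) ≤ t * (1 + s * Real.log t + (s * Real.log t) ^ 2 / 2) :=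
        mul_le_mul_of_nonneg_left hq ht0
    _ = t + s * (t * Real.log t) + s ^ 2 / 2 * (t * (Real.log t) ^ 2) := by ring

lemma DI_mgf_sum {p : Y → ℝ} (h0 : ∀ y, 0 ≤ p y) (h1 : ∑ y, p y = 1)
    {s Λ : ℝ} (hs : 0 ≤ s)
    (hΛ : ∑ y, p y * (Real.log (p y)) ^ 2 ≤ Λ) :
    ∑ y, p y ^ ((1:ℝ) + s) ≤
      Real.exp (s * (∑ y, p y * Real.log (p y)) + s ^ 2 * Λ / 2) := by
  have hle1 : ∀ y, p y ≤ 1 := by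
    intro y
    rw [← h1]
    exact Finset.single_le_sum (fun i _ => h0 i) (Finset.mem_univ y)
  have hterm : ∑ y, p y ^ ((1:ℝ) + s) ≤
      ∑ y, (p y + s * (p y * Real.log (p y)) + s ^ 2 / 2 * (p y * (Real.log (p y)) ^ 2)) :=
    Finset.sum_le_sum fun y _ => DI_mgf_term (h0 y) (hle1 y) hs
  rw [Finset.sum_add_distrib, Finset.sum_add_distrib, ← Finset.mul_sum, ← Finset.mul_sum,
    h1] at hterm
  have h2 : s ^ 2 / 2 * (∑ y, p y * (Real.log (p y)) ^ 2) ≤ s ^ 2 * Λ / 2 := by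
    nlinarith [sq_nonneg s]
  calc ∑ y, p y ^ ((1:ℝ) + s) ≤
        1 + (s * (∑ y, p y * Real.log (p y)) + s ^ 2 * Λ / 2) := by linarith
    _ ≤ Real.exp (s * (∑ y, p y * Real.log (p y)) + s ^ 2 * Λ / 2) := by
        rw [add_comm]
        exact Real.add_one_le_exp _

lemma DI_second_moment {p : Y → ℝ} (h0 : ∀ y, 0 ≤ p y) (h1 : ∑ y, p y = 1)
    {dR : ℝ} (hd : 3 ≤ dR) (hcard : (Fintype.card Y : ℝ) ≤ dR) :
    ∑ y, p y * (Real.log (p y)) ^ 2 ≤ 9 * (Real.log dR) ^ 2 + 9 := by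
  have hle1 : ∀ y, p y ≤ 1 := by
    intro y
    rw [← h1]
    exact Finset.single_le_sum (fun i _ => h0 i) (Finset.mem_univ y)
  have hdR0 : 0 < dR := by linarith
  have hterm : ∑ y, p y * (Real.log (p y)) ^ 2 ≤
      ∑ y, (9 * p y * (Real.log dR) ^ 2 + 9 / dR) :=
    Finset.sum_le_sum fun y _ => DI_term_logsq_bound (h0 y) (hle1 y) hd
  rw [Finset.sum_add_distrib, Finset.sum_const] at hterm
  have hmain : ∑ y, 9 * p y * (Real.log dR) ^ 2 = 9 * (Real.log dR) ^ 2 := by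
    rw [← Finset.sum_mul, ← Finset.mul_sum, h1]
    ring
  rw [hmain, nsmul_eq_mul, Finset.card_univ] at hterm
  have hc : (Fintype.card Y : ℝ) * (9 / dR) ≤ 9 := by
    have h9 : (0:ℝ) ≤ 9 / dR := by positivity
    calc (Fintype.card Y : ℝ) * (9 / dR) ≤ dR * (9 / dR) :=
          mul_le_mul_of_nonneg_right hcard h9
      _ = 9 := by field_simp
  linarith

lemma DI_sum_min_eq {Z : Type*} [Fintype Z] {p q : Z → ℝ}
    (hp : ∑ z, p z = 1) (hq : ∑ z, q z = 1) :
    ∑ z, min (p z) (q z) = 1 - (∑ z, |p z - q z|) / 2 := by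
  have key : ∀ z, min (p z) (q z) = (p z + q z - |p z - q z|) / 2 := by
    intro z
    rcases le_total (p z) (q z) with h | h
    · rw [min_eq_left h, abs_of_nonpos (by linarith)]; ring
    · rw [min_eq_right h, abs_of_nonneg (by linarith)]; ring
  simp only [key]
  rw [Finset.sum_div]
  simp only [sub_div, add_div]
  rw [Finset.sum_sub_distrib, Finset.sum_add_distrib, ← Finset.sum_div, ← Finset.sum_div,
    ← Finset.sum_div, hp, hq]
  ring

end AuxLemmas

section ChannelLemmas
variable {X Y : Type*} [Fintype Y]

lemma DI_prodP_nonneg (W : X → Y → ℝ) (hW : ∀ x, IsDist (W x)) {n : ℕ} (u : Fin n → X)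
    (y : Fin n → Y) : 0 ≤ prodP W u y :=
  Finset.prod_nonneg fun i _ => (hW (u i)).1 (y i)

lemma DI_sum_prodP (W : X → Y → ℝ) (hW : ∀ x, IsDist (W x)) {n : ℕ} (u : Fin n → X) :
    ∑ y : Fin n → Y, prodP W u y = 1 := by
  unfold prodP
  rw [← Fintype.piFinset_univ, ← Finset.prod_univ_sum]
  exact Finset.prod_eq_one fun i _ => (hW (u i)).2

lemma DI_sum_mul_log (p : Y → ℝ) : ∑ y, p y * Real.log (p y) = -(Real.log 2 * H2 p) := by
  unfold H2
  rw [mul_neg, neg_neg, Finset.mul_sum]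
  apply Finset.sum_congr rfl
  intro y _
  rw [Real.logb]
  have h2 : Real.log 2 ≠ 0 := (Real.log_pos one_lt_two).ne'
  field_simp

/-- Chernoff bound for the upper tail of the product distribution. -/
lemma DI_chernoff (W : X → Y → ℝ) (hW : ∀ x, IsDist (W x)) {n : ℕ} (u' : Fin n → X)
    {s Λ τ : ℝ} (hs : 0 ≤ s) (hτ : 0 < τ)
    (hΛ : ∀ x : X, ∑ y, W x y * (Real.log (W x y)) ^ 2 ≤ Λ)
    (S : Finset (Fin n → Y)) (hS : ∀ y ∈ S, τ < prodP W u' y) :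
    ∑ y ∈ S, prodP W u' y ≤
      τ ^ (-s) * Real.exp (s * (-(Real.log 2 * Hn W u')) + n * (s ^ 2 * Λ / 2)) := by
  have hterm : ∀ y ∈ S, prodP W u' y ≤ prodP W u' y ^ ((1:ℝ) + s) * τ ^ (-s) := by
    intro y hy
    have hpos : 0 < prodP W u' y := lt_trans hτ (hS y hy)
    have h1 : (1:ℝ) ≤ (prodP W u' y / τ) ^ s :=
      Real.one_le_rpow (by rw [le_div_iff₀ hτ]; nlinarith [hS y hy]) hs
    calc prodP W u' y ≤ prodP W u' y * (prodP W u' y / τ) ^ s :=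
          le_mul_of_one_le_right (le_of_lt hpos) h1
      _ = prodP W u' y ^ ((1:ℝ) + s) * τ ^ (-s) := by
          rw [Real.div_rpow (le_of_lt hpos) (le_of_lt hτ), Real.rpow_neg (le_of_lt hτ),
            Real.rpow_one_add' (le_of_lt hpos) (by positivity : (1:ℝ) + s ≠ 0)]
          ring
  have h2 : ∑ y ∈ S, prodP W u' y ≤ ∑ y ∈ S, prodP W u' y ^ ((1:ℝ) + s) * τ ^ (-s) :=
    Finset.sum_le_sum hterm
  have h3 : ∑ y ∈ S, prodP W u' y ^ ((1:ℝ) + s) ≤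
      ∑ y : Fin n → Y, prodP W u' y ^ ((1:ℝ) + s) := by
    apply Finset.sum_le_sum_of_subset_of_nonneg (Finset.subset_univ S)
    intro y _ _
    exact Real.rpow_nonneg (DI_prodP_nonneg W hW u' y) _
  have h4 : ∑ y : Fin n → Y, prodP W u' y ^ ((1:ℝ) + s) =
      ∏ i, ∑ b, (W (u' i) b) ^ ((1:ℝ) + s) := by
    have hsplit : ∀ y : Fin n → Y, prodP W u' y ^ ((1:ℝ) + s) =
        ∏ i, (W (u' i) (y i)) ^ ((1:ℝ) + s) := by
      intro y
      exact (Real.finset_prod_rpow _ _ (fun i _ => (hW (u' i)).1 (y i)) _).symm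
    simp_rw [hsplit]
    rw [← Fintype.piFinset_univ]
    exact (Finset.prod_univ_sum (fun _ : Fin n => (Finset.univ : Finset Y))
      (fun i b => W (u' i) b ^ ((1:ℝ) + s))).symm
  have h5 : ∏ i, ∑ b, (W (u' i) b) ^ ((1:ℝ) + s) ≤
      Real.exp (s * (-(Real.log 2 * Hn W u')) + n * (s ^ 2 * Λ / 2)) := by
    have hfac : ∀ i : Fin n, ∑ b, (W (u' i) b) ^ ((1:ℝ) + s) ≤
        Real.exp (s * (-(Real.log 2 * H2 (W (u' i)))) + s ^ 2 * Λ / 2) := by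
      intro i
      have := DI_mgf_sum (hW (u' i)).1 (hW (u' i)).2 hs (hΛ (u' i))
      rwa [DI_sum_mul_log] at this
    calc ∏ i, ∑ b, (W (u' i) b) ^ ((1:ℝ) + s) ≤
          ∏ i, Real.exp (s * (-(Real.log 2 * H2 (W (u' i)))) + s ^ 2 * Λ / 2) :=
          Finset.prod_le_prod (fun i _ => Finset.sum_nonneg fun b _ =>
            Real.rpow_nonneg ((hW (u' i)).1 b) _) (fun i _ => hfac i)
      _ = Real.exp (∑ i, (s * (-(Real.log 2 * H2 (W (u' i)))) + s ^ 2 * Λ / 2)) :=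
          (Real.exp_sum _ _).symm
      _ = Real.exp (s * (-(Real.log 2 * Hn W u')) + n * (s ^ 2 * Λ / 2)) := by
          congr 1
          rw [Finset.sum_add_distrib, Finset.sum_const, Finset.card_univ, Fintype.card_fin,
            nsmul_eq_mul]
          congr 1
          unfold Hn
          rw [← Finset.mul_sum]
          congr 1
          rw [Finset.mul_sum]
          simp
  have hτsnn : (0:ℝ) ≤ τ ^ (-s) := Real.rpow_nonneg (le_of_lt hτ) _
  calc ∑ y ∈ S, prodP W u' y ≤ ∑ y ∈ S, prodP W u' y ^ ((1:ℝ) + s) * τ ^ (-s) := h2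
    _ = (∑ y ∈ S, prodP W u' y ^ ((1:ℝ) + s)) * τ ^ (-s) := by rw [← Finset.sum_mul]
    _ ≤ (∑ y : Fin n → Y, prodP W u' y ^ ((1:ℝ) + s)) * τ ^ (-s) :=
        mul_le_mul_of_nonneg_right h3 hτsnn
    _ ≤ _ := by
        rw [h4, mul_comm]
        exact mul_le_mul_of_nonneg_left h5 hτsnn

end ChannelLemmas

set_option maxHeartbeats 1000000 in
/-- Hypothesis Testing Lemma (Lemma 2 of the paper): if the product output distributions of
`x^n` and `x'^n` are `ε`-distinguishable in total variation, then the typical set of `x^n`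
has small probability under `W_{x'^n}`. -/
theorem stmt1 {X Y : Type*} [Fintype Y] (W : X → Y → ℝ) (hW : ∀ x, IsDist (W x))
    (n : ℕ) (hn : 1 ≤ n) (δ : ℝ) (hδ0 : 0 < δ)
    (hδ : δ ≤ Real.sqrt n * Real.logb 2 (Fintype.card Y))
    (u u' : Fin n → X) (ε : ℝ)
    (hsep : 1 - tvd (prodP W u) (prodP W u') ≤ ε) :
    probOf W u' (typSet W u δ) ≤
      2 * (2 : ℝ) ^ (-δ ^ 2 / (36 * Kf (Fintype.card Y))) +
        ε * (1 + (2 : ℝ) ^ (2 * δ * Real.sqrt n) * (2 : ℝ) ^ (Hn W u - Hn W u')) := by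
  classical
  set L2 := Real.log 2 with hL2def
  have hL2 : 0 < L2 := Real.log_pos one_lt_two
  have hL21 : L2 < 1 := by
    have := Real.log_two_lt_d9
    rw [hL2def]; linarith
  set dR : ℝ := ((max (Fintype.card Y) 3 : ℕ) : ℝ) with hdRdef
  have hdR3 : (3:ℝ) ≤ dR := by
    rw [hdRdef]; push_cast [Nat.cast_max]; exact le_max_right _ _
  have hcard : (Fintype.card Y : ℝ) ≤ dR := by
    rw [hdRdef]; push_cast [Nat.cast_max]; exact le_max_left _ _
  set lg := Real.log dR with hlgdef
  have hlg1 : (1:ℝ) ≤ lg := by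
    rw [hlgdef, Real.le_log_iff_exp_le (by linarith)]
    have := Real.exp_one_lt_d9
    linarith
  have hK : Kf (Fintype.card Y) = (lg / L2) ^ 2 := by
    unfold Kf
    rw [Real.logb]
  have hK0 : 0 < Kf (Fintype.card Y) := by
    rw [hK]; positivity
  set Λ : ℝ := 9 * lg ^ 2 + 9 with hΛdef
  have hΛ0 : 0 < Λ := by rw [hΛdef]; positivity
  have hΛ : ∀ x : X, ∑ y, W x y * (Real.log (W x y)) ^ 2 ≤ Λ := fun x =>
    DI_second_moment (hW x).1 (hW x).2 hdR3 hcard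
  have hn0 : (0:ℝ) < n := by exact_mod_cast hn
  set sqn := Real.sqrt n with hsqndef
  have hsqn : 0 < sqn := Real.sqrt_pos.mpr hn0
  have hsqnsq : sqn ^ 2 = n := Real.sq_sqrt (le_of_lt hn0)
  set s : ℝ := L2 * δ / (sqn * Λ) with hsdef
  have hs : 0 < s := by rw [hsdef]; positivity
  set H' := Hn W u' with hH'def
  set Hu := Hn W u with hHudef
  set τ : ℝ := Real.exp (L2 * (δ * sqn - H')) with hτdef
  have hτ : 0 < τ := Real.exp_pos _
  set c : ℝ := (2 : ℝ) ^ (2 * δ * sqn) * (2 : ℝ) ^ (Hu - H') with hcdef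
  have hcexp : c = Real.exp (L2 * (2 * δ * sqn + (Hu - H'))) := by
    rw [hcdef, Real.rpow_def_of_pos two_pos, Real.rpow_def_of_pos two_pos, ← Real.exp_add]
    congr 1
    ring
  have hc0 : 0 < c := by rw [hcexp]; exact Real.exp_pos _
  set T := typSet W u δ with hTdef
  set A := T.filter (fun y => prodP W u' y ≤ c * prodP W u y) with hAdef
  set B := T.filter (fun y => ¬ (prodP W u' y ≤ c * prodP W u y)) with hBdef
  have hsplit : probOf W u' T = (∑ y ∈ A, prodP W u' y) + (∑ y ∈ B, prodP W u' y) := by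
    rw [probOf, hAdef, hBdef]
    exact (Finset.sum_filter_add_sum_filter_not T _ _).symm
  have hBS : ∀ y ∈ B, τ < prodP W u' y := by
    intro y hy
    rw [hBdef, Finset.mem_filter] at hy
    obtain ⟨hyT, hyB⟩ := hy
    push_neg at hyB
    rw [hTdef, typSet, Finset.mem_filter] at hyT
    obtain ⟨-, hpos, habs⟩ := hyT
    have hlb : -(δ * sqn) ≤ Real.logb 2 (prodP W u y) + Hu := (abs_le.mp habs).1
    have hlog : L2 * (-Hu - δ * sqn) ≤ Real.log (prodP W u y) := by
      have heq : Real.log (prodP W u y) = L2 * Real.logb 2 (prodP W u y) := by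
        rw [Real.logb]
        field_simp
        rw [hL2def]
      rw [heq]
      have := mul_le_mul_of_nonneg_left
        (by linarith : -Hu - δ * sqn ≤ Real.logb 2 (prodP W u y)) (le_of_lt hL2)
      linarith
    have hplb : Real.exp (L2 * (-Hu - δ * sqn)) ≤ prodP W u y := by
      calc Real.exp (L2 * (-Hu - δ * sqn)) ≤ Real.exp (Real.log (prodP W u y)) :=
            Real.exp_le_exp.mpr hlog
        _ = prodP W u y := Real.exp_log hpos
    calc τ = c * Real.exp (L2 * (-Hu - δ * sqn)) := by
          rw [hcexp, ← Real.exp_add, hτdef]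
          congr 1
          ring
      _ ≤ c * prodP W u y := mul_le_mul_of_nonneg_left hplb (le_of_lt hc0)
      _ < prodP W u' y := hyB
  have hchern : ∑ y ∈ B, prodP W u' y ≤
      τ ^ (-s) * Real.exp (s * (-(L2 * H')) + n * (s ^ 2 * Λ / 2)) :=
    DI_chernoff W hW u' (le_of_lt hs) hτ hΛ B hBS
  have hτrs : τ ^ (-s) = Real.exp (L2 * (δ * sqn - H') * (-s)) := by
    rw [hτdef, Real.rpow_def_of_pos (Real.exp_pos _), Real.log_exp]
  have hE : τ ^ (-s) * Real.exp (s * (-(L2 * H')) + n * (s ^ 2 * Λ / 2)) =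
      Real.exp (-(L2 ^ 2 * δ ^ 2) / (2 * Λ)) := by
    rw [hτrs, ← Real.exp_add]
    congr 1
    rw [hsdef, ← hsqnsq]
    field_simp
    ring
  have hEle : Real.exp (-(L2 ^ 2 * δ ^ 2) / (2 * Λ)) ≤
      (2 : ℝ) ^ (-δ ^ 2 / (36 * Kf (Fintype.card Y))) := by
    rw [Real.rpow_def_of_pos two_pos, ← hL2def, Real.exp_le_exp]
    have hKL : Λ ≤ 18 * Kf (Fintype.card Y) * L2 := by
      rw [hK]
      have h1 : lg ^ 2 ≤ (lg / L2) ^ 2 * L2 := by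
        rw [div_pow, div_mul_eq_mul_div, le_div_iff₀ (by positivity)]
        have hsq : L2 ^ 2 = L2 * L2 := sq L2
        nlinarith [mul_nonneg (sq_nonneg lg) hL2.le, hL21]
      rw [hΛdef]
      nlinarith [sq_nonneg lg]
    have hfrac : L2 * δ ^ 2 / (36 * Kf (Fintype.card Y)) ≤ L2 ^ 2 * δ ^ 2 / (2 * Λ) := by
      rw [div_le_div_iff₀ (by positivity) (by positivity)]
      have hnn : 0 ≤ L2 * δ ^ 2 := by positivity
      nlinarith [mul_le_mul_of_nonneg_left hKL hnn]
    have heq : L2 * (-δ ^ 2 / (36 * Kf (Fintype.card Y))) =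
        -(L2 * δ ^ 2 / (36 * Kf (Fintype.card Y))) := by ring
    have heq2 : -(L2 ^ 2 * δ ^ 2) / (2 * Λ) = -(L2 ^ 2 * δ ^ 2 / (2 * Λ)) := by ring
    rw [heq, heq2]
    linarith
  have h2pos : (0:ℝ) < (2 : ℝ) ^ (-δ ^ 2 / (36 * Kf (Fintype.card Y))) :=
    Real.rpow_pos_of_pos two_pos _
  have hB2 : ∑ y ∈ B, prodP W u' y ≤
      2 * (2 : ℝ) ^ (-δ ^ 2 / (36 * Kf (Fintype.card Y))) := by
    calc ∑ y ∈ B, prodP W u' y ≤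
          τ ^ (-s) * Real.exp (s * (-(L2 * H')) + n * (s ^ 2 * Λ / 2)) := hchern
      _ = Real.exp (-(L2 ^ 2 * δ ^ 2) / (2 * Λ)) := hE
      _ ≤ (2 : ℝ) ^ (-δ ^ 2 / (36 * Kf (Fintype.card Y))) := hEle
      _ ≤ 2 * (2 : ℝ) ^ (-δ ^ 2 / (36 * Kf (Fintype.card Y))) := by linarith
  have hmin : ∀ y ∈ A, prodP W u' y ≤ (1 + c) * min (prodP W u y) (prodP W u' y) := by
    intro y hy
    rw [hAdef, Finset.mem_filter] at hy
    obtain ⟨-, hle⟩ := hy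
    have h1 := DI_prodP_nonneg W hW u y
    have h2 := DI_prodP_nonneg W hW u' y
    rcases le_total (prodP W u y) (prodP W u' y) with h | h
    · rw [min_eq_left h]
      nlinarith
    · rw [min_eq_right h]
      nlinarith
  have hminnn : ∀ y, 0 ≤ min (prodP W u y) (prodP W u' y) := fun y =>
    le_min (DI_prodP_nonneg W hW u y) (DI_prodP_nonneg W hW u' y)
  have hA2 : ∑ y ∈ A, prodP W u' y ≤ (1 + c) * ε := by
    have h1 : ∑ y ∈ A, prodP W u' y ≤
        (1 + c) * ∑ y ∈ A, min (prodP W u y) (prodP W u' y) := by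
      rw [Finset.mul_sum]
      exact Finset.sum_le_sum hmin
    have h2 : ∑ y ∈ A, min (prodP W u y) (prodP W u' y) ≤
        ∑ y : Fin n → Y, min (prodP W u y) (prodP W u' y) :=
      Finset.sum_le_sum_of_subset_of_nonneg (Finset.subset_univ _) fun y _ _ => hminnn y
    have h3 : ∑ y : Fin n → Y, min (prodP W u y) (prodP W u' y) =
        1 - tvd (prodP W u) (prodP W u') := by
      rw [tvd]
      exact DI_sum_min_eq (DI_sum_prodP W hW u) (DI_sum_prodP W hW u')
    have h4 : ∑ y ∈ A, min (prodP W u y) (prodP W u' y) ≤ ε := by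
      rw [h3] at h2
      linarith
    calc ∑ y ∈ A, prodP W u' y ≤
          (1 + c) * ∑ y ∈ A, min (prodP W u y) (prodP W u' y) := h1
      _ ≤ (1 + c) * ε := mul_le_mul_of_nonneg_left h4 (by positivity)
  rw [hsplit]
  have hcomm : ε * (1 + c) = (1 + c) * ε := mul_comm _ _
  linarith
end

section
/- Let W be a channel with arbitrary input alphabet 𝒳 and finite output alphabet 𝒴, let n ≥ 1, let 0 < δ ≤ √n · log₂|𝒴|, and let u_1,…,u_N ∈ 𝒳^n satisfy 1 − ½‖W_{u_j} − W_{u_k}‖₁ ≤ 2^{−3δ√n} for all j ≠ k. Then there exists a subset 𝒞 ⊆ {1,…,N} of cardinality |𝒞| ≥ N / ⌈n · log₂|𝒴|⌉ such that for all j ∈ 𝒞, W_{u_j}(𝒯_{u_j}^δ) ≥ 1 − λ₁, and for all j ≠ k ∈ 𝒞, W_{u_j}(𝒯_{u_k}^δ) ≤ λ₂, where λ₁ = 2 · 2^{−δ²/(36·K(|𝒴|))} and λ₂ = 2 · 2^{−δ²/(36·K(|𝒴|))} + 3 · 2^{−δ√n}, with K(d) = (log₂ max{d,3})²; that is, {(u_j,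 𝒯_{u_j}^δ) : j ∈ 𝒞} is an (n,|𝒞|,λ₁,λ₂)-DI code for W. -/
open Real Filter

open DIChannel

namespace DIProof

open Real Finset

/-! ### Elementary analytic inequalities -/

lemma exp_quad_nonneg {x : ℝ} (hx : 0 ≤ x) :
    Real.exp x ≤ 1 + x + x ^ 2 / 2 * Real.exp x := by
  have h1 : ∫ t in (0:ℝ)..x, (Real.exp t - 1) = Real.exp x - 1 - x := by
    rw [intervalIntegral.integral_sub (Real.continuous_exp.intervalIntegrable 0 x)
      intervalIntegrable_const]
    rw [integral_exp, intervalIntegral.integral_const]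
    simp
  have h2 : ∫ t in (0:ℝ)..x, t * Real.exp x = x ^ 2 / 2 * Real.exp x := by
    rw [intervalIntegral.integral_mul_const, integral_id]
    ring
  have h3 : (∫ t in (0:ℝ)..x, (Real.exp t - 1)) ≤ ∫ t in (0:ℝ)..x, t * Real.exp x := by
    apply intervalIntegral.integral_mono_on hx
    · exact (Real.continuous_exp.sub continuous_const).intervalIntegrable 0 x
    · exact (continuous_id.mul continuous_const).intervalIntegrable 0 x
    · intro t ht
      rcases Set.mem_Icc.mp ht with ⟨ht0, htx⟩
      have hpos := Real.exp_pos t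
      have e0 : (1 - t) * Real.exp t ≤ 1 := by
        have h := Real.add_one_le_exp (-t)
        rw [Real.exp_neg] at h
        calc (1 - t) * Real.exp t ≤ (Real.exp t)⁻¹ * Real.exp t :=
              mul_le_mul_of_nonneg_right (by linarith) hpos.le
          _ = 1 := inv_mul_cancel₀ hpos.ne'
      have e2 : t * Real.exp t ≤ t * Real.exp x :=
        mul_le_mul_of_nonneg_left (Real.exp_le_exp.mpr htx) ht0
      nlinarith
  rw [h1, h2] at h3
  linarith

lemma exp_quad (x : ℝ) : Real.exp x ≤ 1 + x + x ^ 2 / 2 * Real.exp |x| := by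
  rcases le_or_gt 0 x with hx | hx
  · rw [abs_of_nonneg hx]; exact exp_quad_nonneg hx
  · rw [abs_of_neg hx]
    set y := -x with hy
    have hy0 : 0 < y := by simp only [hy]; linarith
    have hs : Real.exp (-y) ≤ Real.exp y - 2 * y := by
      have h := Real.self_lt_sinh_iff.mpr hy0
      rw [Real.sinh_eq] at h
      linarith
    have h1 := exp_quad_nonneg hy0.le
    have hx' : x = -y := by simp [hy]
    rw [hx']
    nlinarith

lemma rpow_one_sub_le {p s : ℝ} (hp0 : 0 ≤ p) (hp1 : p ≤ 1) (hs0 : 0 ≤ s) (hs1 : s < 1) :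
    p ^ (1 - s) ≤ p - s * (p * Real.log p) + s ^ 2 / 2 * (p ^ (1 - s) * Real.log p ^ 2) := by
  rcases eq_or_lt_of_le hp0 with h0 | hp
  · rw [← h0]
    rw [Real.zero_rpow (by linarith : (0:ℝ) < 1 - s).ne']
    simp
  · have key : p ^ (1 - s) = p * Real.exp (-s * Real.log p) := by
      rw [Real.rpow_def_of_pos hp,
        show Real.log p * (1 - s) = Real.log p + -s * Real.log p by ring,
        Real.exp_add, Real.exp_log hp]
    have hx : 0 ≤ -s * Real.log p := by
      have := Real.log_nonpos hp0 hp1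
      nlinarith
    have h := exp_quad (-s * Real.log p)
    rw [abs_of_nonneg hx] at h
    have h2 := mul_le_mul_of_nonneg_left h hp.le
    rw [key]
    calc p * Real.exp (-s * Real.log p)
        ≤ p * (1 + -s * Real.log p + (-s * Real.log p) ^ 2 / 2 * Real.exp (-s * Real.log p)) := h2
      _ = p - s * (p * Real.log p) + s ^ 2 / 2 * ((p * Real.exp (-s * Real.log p)) * Real.log p ^ 2) := by
          ring

lemma rpow_one_add_le {p s : ℝ} (hp0 : 0 ≤ p) (hp1 : p ≤ 1) (hs0 : 0 ≤ s) (hs1 : s < 1) :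
    p ^ (1 + s) ≤ p + s * (p * Real.log p) + s ^ 2 / 2 * (p ^ (1 - s) * Real.log p ^ 2) := by
  rcases eq_or_lt_of_le hp0 with h0 | hp
  · rw [← h0]
    rw [Real.zero_rpow (by positivity), Real.zero_rpow (by linarith : (0:ℝ) < 1 - s).ne']
    simp
  · have key : p ^ (1 + s) = p * Real.exp (s * Real.log p) := by
      rw [Real.rpow_def_of_pos hp,
        show Real.log p * (1 + s) = Real.log p + s * Real.log p by ring,
        Real.exp_add, Real.exp_log hp]
    have key2 : p ^ (1 - s) = p * Real.exp (-s * Real.log p) := by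
      rw [Real.rpow_def_of_pos hp,
        show Real.log p * (1 - s) = Real.log p + -s * Real.log p by ring,
        Real.exp_add, Real.exp_log hp]
    have hlog : Real.log p ≤ 0 := Real.log_nonpos hp0 hp1
    have hx : s * Real.log p ≤ 0 := mul_nonpos_of_nonneg_of_nonpos hs0 hlog
    have h := exp_quad (s * Real.log p)
    rw [abs_of_nonpos hx] at h
    have h2 := mul_le_mul_of_nonneg_left h hp.le
    rw [key, key2]
    calc p * Real.exp (s * Real.log p)
        ≤ p * (1 + s * Real.log p + (s * Real.log p) ^ 2 / 2 * Real.exp (-(s * Real.log p))) := h2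
      _ = p + s * (p * Real.log p) + s ^ 2 / 2 * ((p * Real.exp (-s * Real.log p)) * Real.log p ^ 2) := by
          rw [show -(s * Real.log p) = -s * Real.log p by ring]; ring

lemma log_three_bound : (1.09 : ℝ) ≤ Real.log 3 := by
  rw [Real.le_log_iff_exp_le (by norm_num : (0:ℝ) < 3)]
  have hsplit : Real.exp (1.09 : ℝ) = Real.exp 1 * Real.exp 0.09 := by
    rw [← Real.exp_add]; norm_num
  have h9 : Real.exp (0.09 : ℝ) ≤ 1 / 0.91 := by
    have h := Real.add_one_le_exp (-0.09 : ℝ)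
    rw [Real.exp_neg] at h
    have hpos := Real.exp_pos (0.09 : ℝ)
    rw [le_div_iff₀ (by norm_num : (0:ℝ) < 0.91)]
    have h2 : (0.91 : ℝ) * Real.exp 0.09 ≤ (Real.exp 0.09)⁻¹ * Real.exp 0.09 := by
      apply mul_le_mul_of_nonneg_right _ hpos.le
      linarith
    rw [inv_mul_cancel₀ hpos.ne'] at h2
    linarith
  rw [hsplit]
  calc Real.exp 1 * Real.exp 0.09 ≤ 2.7182818286 * (1 / 0.91) := by
        apply mul_le_mul Real.exp_one_lt_d9.le h9 (Real.exp_pos _).le (by norm_num)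
    _ ≤ 3 := by norm_num

lemma exp_ninth : Real.exp (Real.log 2 / 9) ≤ 9 / 8 := by
  rw [show (9:ℝ)/8 = Real.exp (Real.log (9/8)) by rw [Real.exp_log]; norm_num]
  apply Real.exp_le_exp.mpr
  rw [div_le_iff₀ (by norm_num : (0:ℝ) < 9)]
  calc Real.log 2 ≤ Real.log ((9/8 : ℝ) ^ (9:ℕ)) := by
        apply Real.log_le_log (by norm_num)
        norm_num
    _ = 9 * Real.log (9/8) := by rw [Real.log_pow]; norm_num
    _ = Real.log (9/8) * 9 := by ring

end DIProof

namespace DIProof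
open Real Finset DIChannel

variable {Y : Type*} [Fintype Y]

lemma dist_le_one {p : Y → ℝ} (hp : IsDist p) (y : Y) : p y ≤ 1 := by
  have h := Finset.single_le_sum (fun i _ => hp.1 i) (Finset.mem_univ y)
  rw [hp.2] at h; exact h

lemma T_bound {p : Y → ℝ} (hp : IsDist p) {m : ℕ} (hm : 3 ≤ m)
    (hcard : Fintype.card Y ≤ m) {s : ℝ} (hs0 : 0 ≤ s)
    (hs1 : s ≤ Real.log 2 / (18 * Real.log m)) :
    ∑ y, p y ^ (1 - s) * Real.log (p y) ^ 2 ≤ 18 * Real.log m ^ 2 / Real.log 2 := by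
  classical
  have hm3 : (3:ℝ) ≤ m := by exact_mod_cast hm
  have hm0 : (0:ℝ) < m := by linarith
  have hm1 : (1:ℝ) ≤ m := by linarith
  set L := Real.log (m : ℝ) with hLdef
  have hL : (1.09 : ℝ) ≤ L :=
    le_trans log_three_bound (Real.log_le_log (by norm_num) (by exact_mod_cast hm))
  have hL0 : (0:ℝ) < L := by linarith
  have hlog2pos : (0:ℝ) < Real.log 2 := Real.log_pos (by norm_num)
  have hlog2lt : Real.log 2 < 0.6931471808 := Real.log_two_lt_d9
  -- threshold
  set c : ℝ := (m:ℝ) ^ (-2 : ℝ) with hcdef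
  have hc0 : 0 < c := Real.rpow_pos_of_pos hm0 _
  have hc1 : c ≤ 1 := Real.rpow_le_one_of_one_le_of_nonpos hm1 (by norm_num)
  have hlogc : Real.log c = -2 * L := by
    rw [hcdef, Real.log_rpow hm0]
  have hsmall : s ≤ 9 / 250 := by
    have : Real.log 2 / (18 * L) ≤ 0.6931471808 / (18 * 1.09) := by
      apply div_le_div₀ (by norm_num) hlog2lt.le (by nlinarith) (by nlinarith)
    calc s ≤ Real.log 2 / (18 * L) := hs1
      _ ≤ 0.6931471808 / (18 * 1.09) := this
      _ ≤ 9 / 250 := by norm_num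
  -- part A bound
  have hA : ∀ y, c ≤ p y → p y ^ (1 - s) * Real.log (p y) ^ 2 ≤ 9/2 * L^2 * p y := by
    intro y hcy
    have hpy : 0 < p y := lt_of_lt_of_le hc0 hcy
    have hlogp_le : Real.log (p y) ≤ 0 := Real.log_nonpos hpy.le (dist_le_one hp y)
    have hlogp_ge : -2 * L ≤ Real.log (p y) := by
      rw [← hlogc]; exact Real.log_le_log hc0 hcy
    have hsq : Real.log (p y) ^ 2 ≤ (2*L) ^ 2 := by nlinarith
    have hps : p y ^ (1 - s) ≤ 9/8 * p y := by
      have e1 : p y ^ (1 - s) = p y * p y ^ (-s) := by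
        rw [show (1:ℝ) - s = 1 + (-s) by ring, Real.rpow_add hpy, Real.rpow_one]
      have e2 : p y ^ (-s) ≤ c ^ (-s) :=
        Real.rpow_le_rpow_of_nonpos hc0 hcy (by linarith)
      have e3 : c ^ (-s) = (m:ℝ) ^ ((2:ℝ)*s) := by
        rw [hcdef, ← Real.rpow_mul hm0.le]
        norm_num
      have e4 : (m:ℝ) ^ ((2:ℝ)*s) ≤ 9/8 := by
        rw [Real.rpow_def_of_pos hm0]
        refine le_trans (Real.exp_le_exp.mpr ?_) exp_ninth
        calc Real.log m * (2*s) ≤ L * (2 * (Real.log 2 / (18 * L))) := by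
              apply mul_le_mul_of_nonneg_left (by linarith) hL0.le
          _ = Real.log 2 / 9 := by field_simp; ring
      calc p y ^ (1 - s) = p y * p y ^ (-s) := e1
        _ ≤ p y * (9/8) := by
            apply mul_le_mul_of_nonneg_left _ hpy.le
            exact le_trans e2 (e3 ▸ e4)
        _ = 9/8 * p y := by ring
    have hterm_nonneg : (0:ℝ) ≤ p y ^ (1 - s) := Real.rpow_nonneg hpy.le _
    calc p y ^ (1 - s) * Real.log (p y) ^ 2 ≤ (9/8 * p y) * (2*L)^2 := by
          apply mul_le_mul hps hsq (sq_nonneg _) (by positivity)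
      _ = 9/2 * L^2 * p y := by ring
  -- part B bound
  have hB : ∀ y, p y < c → p y ^ (1 - s) * Real.log (p y) ^ 2 ≤ 25 * c ^ ((27:ℝ)/50) := by
    intro y hyc
    rcases eq_or_lt_of_le (hp.1 y) with h0 | hpy
    · rw [← h0, Real.zero_rpow (by linarith : (0:ℝ) < 1 - s).ne']
      simp
      positivity
    · have hlog1 : -Real.log (p y) ≤ 5 * p y ^ (-(1:ℝ)/5) := by
        rw [← Real.log_inv]
        calc Real.log (p y)⁻¹ ≤ ((p y)⁻¹) ^ ((1:ℝ)/5) / (1/5) :=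
              Real.log_le_rpow_div (inv_nonneg.mpr hpy.le) (by norm_num)
          _ = 5 * p y ^ (-(1:ℝ)/5) := by
              rw [← Real.rpow_neg_one (p y), ← Real.rpow_mul hpy.le]
              norm_num
              ring
      have hlog0 : 0 ≤ -Real.log (p y) := by
        have := Real.log_nonpos hpy.le (dist_le_one hp y)
        linarith
      have hrp5 : (0:ℝ) ≤ 5 * p y ^ (-(1:ℝ)/5) := by positivity
      have hlogsq : Real.log (p y) ^ 2 ≤ 25 * p y ^ (-(2:ℝ)/5) := by
        calc Real.log (p y) ^ 2 = (-Real.log (p y)) ^ 2 := by ring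
          _ ≤ (5 * p y ^ (-(1:ℝ)/5)) ^ 2 := by
              apply sq_le_sq' (by linarith) hlog1
          _ = 25 * p y ^ (-(2:ℝ)/5) := by
              rw [mul_pow, ← Real.rpow_natCast (p y ^ (-(1:ℝ)/5)) 2, ← Real.rpow_mul hpy.le]
              norm_num
      have hcomb : p y ^ (1 - s) * (25 * p y ^ (-(2:ℝ)/5)) = 25 * p y ^ (1 - s - 2/5) := by
        rw [show (1:ℝ) - s - 2/5 = (1 - s) + (-(2:ℝ)/5) by ring, Real.rpow_add hpy]
        ring
      have he : (27:ℝ)/50 ≤ 1 - s - 2/5 := by linarith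
      have hfin : p y ^ (1 - s - 2/5) ≤ c ^ ((27:ℝ)/50) := by
        calc p y ^ (1 - s - 2/5) ≤ c ^ (1 - s - 2/5) :=
              Real.rpow_le_rpow (hp.1 y) hyc.le (by linarith)
          _ ≤ c ^ ((27:ℝ)/50) := Real.rpow_le_rpow_of_exponent_ge hc0 hc1 he
      calc p y ^ (1 - s) * Real.log (p y) ^ 2
          ≤ p y ^ (1 - s) * (25 * p y ^ (-(2:ℝ)/5)) :=
            mul_le_mul_of_nonneg_left hlogsq (Real.rpow_nonneg hpy.le _)
        _ = 25 * p y ^ (1 - s - 2/5) := hcomb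
        _ ≤ 25 * c ^ ((27:ℝ)/50) := by linarith
  -- assemble
  rw [← Finset.sum_filter_add_sum_filter_not Finset.univ (fun y => c ≤ p y)]
  have hsumA : ∑ y ∈ Finset.univ.filter (fun y => c ≤ p y), p y ^ (1 - s) * Real.log (p y) ^ 2
      ≤ 9/2 * L^2 := by
    calc ∑ y ∈ Finset.univ.filter (fun y => c ≤ p y), p y ^ (1 - s) * Real.log (p y) ^ 2
        ≤ ∑ y ∈ Finset.univ.filter (fun y => c ≤ p y), 9/2 * L^2 * p y :=
          Finset.sum_le_sum (fun y hy => hA y (Finset.mem_filter.mp hy).2)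
      _ = 9/2 * L^2 * ∑ y ∈ Finset.univ.filter (fun y => c ≤ p y), p y := by
          rw [Finset.mul_sum]
      _ ≤ 9/2 * L^2 * 1 := by
          apply mul_le_mul_of_nonneg_left _ (by positivity)
          rw [← hp.2]
          exact Finset.sum_le_sum_of_subset_of_nonneg (Finset.filter_subset _ _)
            (fun y _ _ => hp.1 y)
      _ = 9/2 * L^2 := by ring
  have hsumB : ∑ y ∈ Finset.univ.filter (fun y => ¬ c ≤ p y), p y ^ (1 - s) * Real.log (p y) ^ 2
      ≤ 25 := by
    have hcard' : ((Finset.univ.filter (fun y => ¬ c ≤ p y)).card : ℝ) ≤ (m:ℝ) := by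
      have h1 : (Finset.univ.filter (fun y => ¬ c ≤ p y)).card ≤ Fintype.card Y := by
        rw [← Finset.card_univ]
        exact Finset.card_filter_le _ _
      exact_mod_cast le_trans h1 hcard
    have hcm : (m:ℝ) * c ^ ((27:ℝ)/50) ≤ 1 := by
      have e1 : c ^ ((27:ℝ)/50) = (m:ℝ) ^ (-(27:ℝ)/25) := by
        rw [hcdef, ← Real.rpow_mul hm0.le]
        norm_num
      rw [e1]
      have e2 : (m:ℝ) * (m:ℝ) ^ (-(27:ℝ)/25) = (m:ℝ) ^ (1 + (-(27:ℝ)/25)) := by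
        rw [Real.rpow_add hm0, Real.rpow_one]
      rw [show (-27:ℝ)/25 = -(27:ℝ)/25 by norm_num] at *
      rw [e2]
      exact Real.rpow_le_one_of_one_le_of_nonpos hm1 (by norm_num)
    calc ∑ y ∈ Finset.univ.filter (fun y => ¬ c ≤ p y), p y ^ (1 - s) * Real.log (p y) ^ 2
        ≤ (Finset.univ.filter (fun y => ¬ c ≤ p y)).card • (25 * c ^ ((27:ℝ)/50)) :=
          Finset.sum_le_card_nsmul _ _ _ (fun y hy => hB y (lt_of_not_ge (Finset.mem_filter.mp hy).2))
      _ = ((Finset.univ.filter (fun y => ¬ c ≤ p y)).card : ℝ) * (25 * c ^ ((27:ℝ)/50)) := by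
          rw [nsmul_eq_mul]
      _ ≤ (m:ℝ) * (25 * c ^ ((27:ℝ)/50)) := by
          apply mul_le_mul_of_nonneg_right hcard' (by positivity)
      _ = 25 * ((m:ℝ) * c ^ ((27:ℝ)/50)) := by ring
      _ ≤ 25 * 1 := by nlinarith [hcm]
      _ = 25 := by ring
  have final : 9/2 * L^2 + 25 ≤ 18 * L^2 / Real.log 2 := by
    rw [le_div_iff₀ hlog2pos]
    nlinarith [sq_nonneg (L - 109/100)]
  linarith

end DIProof

namespace DIProof
open Real Finset DIChannel

variable {Y : Type*} [Fintype Y]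

lemma H2_log2 (p : Y → ℝ) :
    Real.log 2 * H2 p = -∑ y, p y * Real.log (p y) := by
  have h2 : Real.log 2 ≠ 0 := (Real.log_pos one_lt_two).ne'
  simp only [H2, Real.logb, mul_neg, neg_inj, Finset.mul_sum]
  apply Finset.sum_congr rfl
  intro y _
  field_simp

lemma letter_low {p : Y → ℝ} (hp : IsDist p) {s Tb : ℝ} (hs0 : 0 ≤ s) (hs1 : s < 1)
    (hT : ∑ y, p y ^ (1 - s) * Real.log (p y) ^ 2 ≤ Tb) :
    ∑ y, p y ^ (1 - s) ≤ Real.exp (s * (Real.log 2 * H2 p) + s ^ 2 / 2 * Tb) := by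
  have step : ∑ y, p y ^ (1 - s)
      ≤ ∑ y, (p y - s * (p y * Real.log (p y)) + s ^ 2 / 2 * (p y ^ (1 - s) * Real.log (p y) ^ 2)) :=
    Finset.sum_le_sum fun y _ => rpow_one_sub_le (hp.1 y) (dist_le_one hp y) hs0 hs1
  have expand : ∑ y, (p y - s * (p y * Real.log (p y)) + s ^ 2 / 2 * (p y ^ (1 - s) * Real.log (p y) ^ 2))
      = 1 + s * (-∑ y, p y * Real.log (p y)) + s ^ 2 / 2 * ∑ y, p y ^ (1 - s) * Real.log (p y) ^ 2 := by
    rw [Finset.sum_add_distrib, Finset.sum_sub_distrib, ← Finset.mul_sum, ← Finset.mul_sum, hp.2]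
    ring
  have hub : ∑ y, p y ^ (1 - s) ≤ 1 + (s * (Real.log 2 * H2 p) + s ^ 2 / 2 * Tb) := by
    rw [H2_log2]
    calc ∑ y, p y ^ (1 - s) ≤ _ := step
      _ = _ := expand
      _ ≤ 1 + ((-∑ y, p y * Real.log (p y)) * s + s ^ 2 / 2 * Tb) := by
          have := mul_le_mul_of_nonneg_left hT (by positivity : (0:ℝ) ≤ s ^ 2 / 2)
          nlinarith
      _ = 1 + (s * (-∑ y, p y * Real.log (p y)) + s ^ 2 / 2 * Tb) := by ring
  calc ∑ y, p y ^ (1 - s) ≤ 1 + (s * (Real.log 2 * H2 p) + s ^ 2 / 2 * Tb) := hub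
    _ ≤ Real.exp (s * (Real.log 2 * H2 p) + s ^ 2 / 2 * Tb) := by
        have := Real.add_one_le_exp (s * (Real.log 2 * H2 p) + s ^ 2 / 2 * Tb)
        linarith

lemma letter_high {p : Y → ℝ} (hp : IsDist p) {s Tb : ℝ} (hs0 : 0 ≤ s) (hs1 : s < 1)
    (hT : ∑ y, p y ^ (1 - s) * Real.log (p y) ^ 2 ≤ Tb) :
    ∑ y, p y ^ (1 + s) ≤ Real.exp (-(s * (Real.log 2 * H2 p)) + s ^ 2 / 2 * Tb) := by
  have step : ∑ y, p y ^ (1 + s)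
      ≤ ∑ y, (p y + s * (p y * Real.log (p y)) + s ^ 2 / 2 * (p y ^ (1 - s) * Real.log (p y) ^ 2)) :=
    Finset.sum_le_sum fun y _ => rpow_one_add_le (hp.1 y) (dist_le_one hp y) hs0 hs1
  have expand : ∑ y, (p y + s * (p y * Real.log (p y)) + s ^ 2 / 2 * (p y ^ (1 - s) * Real.log (p y) ^ 2))
      = 1 + s * (∑ y, p y * Real.log (p y)) + s ^ 2 / 2 * ∑ y, p y ^ (1 - s) * Real.log (p y) ^ 2 := by
    rw [Finset.sum_add_distrib, Finset.sum_add_distrib, ← Finset.mul_sum, ← Finset.mul_sum, hp.2]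
  have hub : ∑ y, p y ^ (1 + s) ≤ 1 + (-(s * (Real.log 2 * H2 p)) + s ^ 2 / 2 * Tb) := by
    rw [H2_log2]
    calc ∑ y, p y ^ (1 + s) ≤ _ := step
      _ = _ := expand
      _ ≤ 1 + (-(s * -∑ y, p y * Real.log (p y)) + s ^ 2 / 2 * Tb) := by
          have := mul_le_mul_of_nonneg_left hT (by positivity : (0:ℝ) ≤ s ^ 2 / 2)
          nlinarith
  calc ∑ y, p y ^ (1 + s) ≤ _ := hub
    _ ≤ Real.exp (-(s * (Real.log 2 * H2 p)) + s ^ 2 / 2 * Tb) := by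
        have := Real.add_one_le_exp (-(s * (Real.log 2 * H2 p)) + s ^ 2 / 2 * Tb)
        linarith

lemma H2_nonneg {p : Y → ℝ} (hp : IsDist p) : 0 ≤ H2 p := by
  rw [H2]
  have : ∑ y, p y * Real.logb 2 (p y) ≤ 0 := by
    apply Finset.sum_nonpos
    intro y _
    apply mul_nonpos_of_nonneg_of_nonpos (hp.1 y)
    exact Real.logb_nonpos (by norm_num) (hp.1 y) (dist_le_one hp y)
  linarith

lemma H2_le_logb {p : Y → ℝ} (hp : IsDist p) :
    H2 p ≤ Real.logb 2 (Fintype.card Y) := by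
  have hlog2 : (0:ℝ) < Real.log 2 := Real.log_pos one_lt_two
  have hcard : 0 < Fintype.card Y := Fintype.card_pos_iff.mpr ⟨Classical.choice (by
    by_contra h
    rw [not_nonempty_iff] at h
    have : ∑ y : Y, p y = 0 := Finset.sum_of_isEmpty _
    rw [hp.2] at this
    norm_num at this)⟩
  set d : ℝ := (Fintype.card Y : ℝ) with hd
  have hd0 : (0:ℝ) < d := by rw [hd]; exact_mod_cast hcard
  -- work with natural logs
  rw [← mul_le_mul_iff_right₀ hlog2, H2_log2]
  have hrhs : Real.log 2 * Real.logb 2 d = Real.log d := by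
    rw [Real.logb]
    field_simp
  rw [hrhs]
  classical
  have key : ∀ y, -(p y * Real.log (p y)) ≤ (if 0 < p y then 1 / d - p y + p y * Real.log d else 0) := by
    intro y
    by_cases hpy : 0 < p y
    · simp only [hpy, if_true]
      have hlogle : Real.log (1 / (d * p y)) ≤ 1 / (d * p y) - 1 :=
        Real.log_le_sub_one_of_pos (by positivity)
      have hexpand : Real.log (1 / (d * p y)) = -Real.log d - Real.log (p y) := by
        rw [one_div, Real.log_inv, Real.log_mul hd0.ne' hpy.ne']
        ring
      rw [hexpand] at hlogle
      have := mul_le_mul_of_nonneg_left hlogle hpy.le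
      have hcancel : p y * (1 / (d * p y) - 1) = 1 / d - p y := by
        field_simp
      rw [hcancel] at this
      nlinarith
    · have : p y = 0 := le_antisymm (not_lt.mp hpy) (hp.1 y)
      simp [this]
  have hsum : -∑ y, p y * Real.log (p y) ≤ ∑ y, (if 0 < p y then 1 / d - p y + p y * Real.log d else 0) := by
    rw [← Finset.sum_neg_distrib]
    exact Finset.sum_le_sum fun y _ => key y
  have hsupp : ∑ y, (if 0 < p y then 1 / d - p y + p y * Real.log d else 0) ≤ Real.log d := by
    rw [← Finset.sum_filter]
    set S := Finset.univ.filter (fun y => 0 < p y) with hS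
    have hSy : ∑ y ∈ S, (1 / d - p y + p y * Real.log d)
        = S.card / d - ∑ y ∈ S, p y + (∑ y ∈ S, p y) * Real.log d := by
      rw [Finset.sum_add_distrib, Finset.sum_sub_distrib, Finset.sum_const, ← Finset.sum_mul]
      simp [nsmul_eq_mul]
      ring
    have hsum1 : ∑ y ∈ S, p y = 1 := by
      rw [← hp.2]
      apply Finset.sum_subset (Finset.filter_subset _ _)
      intro y _ hy
      simp only [hS, Finset.mem_filter, Finset.mem_univ, true_and, not_lt] at hy
      exact le_antisymm hy (hp.1 y)
    have hScard : (S.card : ℝ) ≤ d := by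
      rw [hd]
      exact_mod_cast le_trans (Finset.card_filter_le _ _) (le_of_eq Finset.card_univ)
    rw [hSy, hsum1]
    have : (S.card : ℝ) / d ≤ 1 := by
      rw [div_le_one hd0]; exact hScard
    linarith
  linarith

end DIProof

namespace DIProof
open Real Finset DIChannel

variable {X Y : Type*} [Fintype Y]

lemma sum_prodP_rpow (W : X → Y → ℝ) (hW0 : ∀ x y, 0 ≤ W x y) {n : ℕ} (u : Fin n → X) (c : ℝ) :
    ∑ y : Fin n → Y, prodP W u y ^ c = ∏ i, ∑ b, W (u i) b ^ c := by
  classical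
  rw [Finset.prod_univ_sum, Fintype.piFinset_univ]
  apply Finset.sum_congr rfl
  intro y _
  rw [prodP, Real.finset_prod_rpow _ _ (fun i _ => hW0 (u i) (y i)) c]

lemma prodP_nonneg (W : X → Y → ℝ) (hW0 : ∀ x y, 0 ≤ W x y) {n : ℕ} (u : Fin n → X)
    (y : Fin n → Y) : 0 ≤ prodP W u y :=
  Finset.prod_nonneg fun i _ => hW0 (u i) (y i)

lemma sum_prodP (W : X → Y → ℝ) (hW : ∀ x, IsDist (W x)) {n : ℕ} (u : Fin n → X) :
    ∑ y : Fin n → Y, prodP W u y = 1 := by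
  classical
  have : ∀ y : Fin n → Y, prodP W u y = ∏ i, W (u i) (y i) := fun y => rfl
  rw [show (∑ y : Fin n → Y, prodP W u y) = ∑ y ∈ Fintype.piFinset (fun _ : Fin n => (Finset.univ : Finset Y)), ∏ i, W (u i) (y i) by rw [Fintype.piFinset_univ]; rfl]
  rw [← Finset.prod_univ_sum]
  rw [Finset.prod_eq_one]
  intro i _
  exact (hW (u i)).2

lemma isDist_prodP (W : X → Y → ℝ) (hW : ∀ x, IsDist (W x)) {n : ℕ} (u : Fin n → X) :
    IsDist (prodP W u) :=
  ⟨prodP_nonneg W (fun x y => (hW x).1 y) u, sum_prodP W hW u⟩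

end DIProof

namespace DIProof
open Real Finset DIChannel

lemma concentration {X Y : Type*} [Fintype Y] (W : X → Y → ℝ) (hW : ∀ x, IsDist (W x))
    {n : ℕ} (hn : 1 ≤ n) {δ : ℝ} (hδ0 : 0 < δ)
    (hδ : δ ≤ Real.sqrt n * Real.logb 2 (Fintype.card Y))
    (hd2 : 2 ≤ Fintype.card Y) (u : Fin n → X) :
    1 - 2 * (2:ℝ) ^ (-δ ^ 2 / (36 * Kf (Fintype.card Y))) ≤ probOf W u (typSet W u δ) := by
  classical
  set d := Fintype.card Y with hd
  set m : ℕ := max d 3 with hm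
  have hm3 : 3 ≤ m := le_max_right _ _
  have hdm : d ≤ m := le_max_left _ _
  have hm3' : (3:ℝ) ≤ (m:ℝ) := by exact_mod_cast hm3
  have hm0 : (0:ℝ) < (m:ℝ) := by linarith
  have hd0 : (0:ℝ) < (d:ℝ) := by
    have : (2:ℝ) ≤ (d:ℝ) := by exact_mod_cast hd2
    linarith
  set L := Real.log (m:ℝ) with hL
  have hL109 : (1.09:ℝ) ≤ L :=
    le_trans log_three_bound (Real.log_le_log (by norm_num) hm3')
  have hL0 : 0 < L := by linarith
  have hlog2 : (0:ℝ) < Real.log 2 := Real.log_pos one_lt_two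
  have hlog2lt : Real.log 2 < 0.6931471808 := Real.log_two_lt_d9
  set Tb : ℝ := 18 * L ^ 2 / Real.log 2 with hTbdef
  have hTb0 : 0 < Tb := by positivity
  have hn1 : (1:ℝ) ≤ (n:ℝ) := by exact_mod_cast hn
  have hsqn0 : 0 < Real.sqrt n := Real.sqrt_pos.mpr (by linarith)
  have hsqsq : Real.sqrt n * Real.sqrt n = (n:ℝ) := Real.mul_self_sqrt (by linarith)
  set s : ℝ := δ * Real.log 2 / (Real.sqrt n * Tb) with hsdef
  have hs0 : 0 < s := by positivity
  have hlogd_le : Real.log (d:ℝ) ≤ L := Real.log_le_log hd0 (by exact_mod_cast hdm)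
  have hsle : s ≤ Real.log 2 / (18 * L) := by
    have h1 : δ * Real.log 2 ≤ Real.sqrt n * Real.log (d:ℝ) := by
      have : Real.logb 2 (d:ℝ) = Real.log (d:ℝ) / Real.log 2 := rfl
      rw [this] at hδ
      calc δ * Real.log 2 ≤ (Real.sqrt n * (Real.log (d:ℝ) / Real.log 2)) * Real.log 2 :=
            mul_le_mul_of_nonneg_right hδ hlog2.le
        _ = Real.sqrt n * Real.log (d:ℝ) := by field_simp
    have h2 : δ * Real.log 2 ≤ Real.sqrt n * L :=
      le_trans h1 (mul_le_mul_of_nonneg_left hlogd_le hsqn0.le)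
    have h3 : s ≤ (Real.sqrt n * L) / (Real.sqrt n * Tb) := by
      rw [hsdef]
      exact div_le_div_of_nonneg_right h2 (by positivity) |>.trans_eq rfl
    have h4 : (Real.sqrt n * L) / (Real.sqrt n * Tb) = L / Tb := by
      rw [mul_div_mul_left _ _ hsqn0.ne']
    have h5 : L / Tb = Real.log 2 / (18 * L) := by
      rw [hTbdef]
      field_simp
    rw [h4, h5] at h3
    exact h3
  have hs1 : s < 1 := by
    have : Real.log 2 / (18 * L) < 1 := by
      rw [div_lt_one (by positivity)]
      nlinarith
    linarith
  -- per-letter T bounds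
  have hTi : ∀ i : Fin n, ∑ b, W (u i) b ^ (1 - s) * Real.log (W (u i) b) ^ 2 ≤ Tb := by
    intro i
    rw [hTbdef]
    exact T_bound (hW (u i)) hm3 (le_trans (le_of_eq hd) hdm) hs0.le hsle
  -- product MGF bounds
  have hProdLow : ∑ y : Fin n → Y, prodP W u y ^ (1 - s)
      ≤ Real.exp (s * (Real.log 2 * Hn W u) + n * (s ^ 2 / 2 * Tb)) := by
    rw [sum_prodP_rpow W (fun x y => (hW x).1 y) u]
    calc ∏ i, ∑ b, W (u i) b ^ (1 - s)
        ≤ ∏ i, Real.exp (s * (Real.log 2 * H2 (W (u i))) + s ^ 2 / 2 * Tb) := by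
          apply Finset.prod_le_prod
          · intro i _
            exact Finset.sum_nonneg fun b _ => Real.rpow_nonneg ((hW (u i)).1 b) _
          · intro i _
            exact letter_low (hW (u i)) hs0.le hs1 (hTi i)
      _ = Real.exp (∑ i, (s * (Real.log 2 * H2 (W (u i))) + s ^ 2 / 2 * Tb)) := by
          rw [Real.exp_sum]
      _ = Real.exp (s * (Real.log 2 * Hn W u) + n * (s ^ 2 / 2 * Tb)) := by
          congr 1
          rw [Finset.sum_add_distrib, Finset.sum_const, Hn, Finset.mul_sum]
          simp [Finset.mul_sum, nsmul_eq_mul, Fintype.card_fin]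
  have hProdHigh : ∑ y : Fin n → Y, prodP W u y ^ (1 + s)
      ≤ Real.exp (-(s * (Real.log 2 * Hn W u)) + n * (s ^ 2 / 2 * Tb)) := by
    rw [sum_prodP_rpow W (fun x y => (hW x).1 y) u]
    calc ∏ i, ∑ b, W (u i) b ^ (1 + s)
        ≤ ∏ i, Real.exp (-(s * (Real.log 2 * H2 (W (u i)))) + s ^ 2 / 2 * Tb) := by
          apply Finset.prod_le_prod
          · intro i _
            exact Finset.sum_nonneg fun b _ => Real.rpow_nonneg ((hW (u i)).1 b) _
          · intro i _
            exact letter_high (hW (u i)) hs0.le hs1 (hTi i)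
      _ = Real.exp (∑ i, (-(s * (Real.log 2 * H2 (W (u i)))) + s ^ 2 / 2 * Tb)) := by
          rw [Real.exp_sum]
      _ = Real.exp (-(s * (Real.log 2 * Hn W u)) + n * (s ^ 2 / 2 * Tb)) := by
          congr 1
          rw [Finset.sum_add_distrib, Finset.sum_const, Hn, Finset.mul_sum]
          simp [Finset.mul_sum, nsmul_eq_mul, Fintype.card_fin]
  -- the common exponent computation
  set a : ℝ := δ * Real.sqrt n with hadef
  have ha0 : 0 < a := by positivity
  have hKf : Kf d = (L / Real.log 2) ^ 2 := by
    rw [Kf, Real.logb, ← hm, ← hL]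
  have hExpEq : -(a * s * Real.log 2) + n * (s ^ 2 / 2 * Tb)
      = Real.log 2 * (-δ ^ 2 / (36 * Kf d)) := by
    rw [hKf, hadef, hsdef, hTbdef]
    field_simp
    linear_combination (-(36:ℝ)) * hsqsq
  have hE0 : (0:ℝ) < (2:ℝ) ^ (-δ ^ 2 / (36 * Kf d)) := Real.rpow_pos_of_pos (by norm_num) _
  have hEexp : (2:ℝ) ^ (-δ ^ 2 / (36 * Kf d)) = Real.exp (Real.log 2 * (-δ ^ 2 / (36 * Kf d))) := by
    rw [Real.rpow_def_of_pos (by norm_num)]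
  set E : ℝ := (2:ℝ) ^ (-δ ^ 2 / (36 * Kf d)) with hEdef
  set Slo : Finset (Fin n → Y) := Finset.univ.filter
    (fun y => 0 < prodP W u y ∧ Real.logb 2 (prodP W u y) + Hn W u ≤ -a) with hSlo
  set Shi : Finset (Fin n → Y) := Finset.univ.filter
    (fun y => 0 < prodP W u y ∧ a ≤ Real.logb 2 (prodP W u y) + Hn W u) with hShi
  have hPnn : ∀ y : Fin n → Y, 0 ≤ prodP W u y :=
    prodP_nonneg W (fun x b => (hW x).1 b) u
  have tail_lo : ∑ y ∈ Slo, prodP W u y ≤ E := by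
    have hterm : ∀ y ∈ Slo, prodP W u y ≤ prodP W u y ^ (1 - s) * (2:ℝ) ^ ((-Hn W u - a) * s) := by
      intro y hy
      obtain ⟨hyP, hylb⟩ := (Finset.mem_filter.mp hy).2
      have hPle : prodP W u y ≤ (2:ℝ) ^ (-Hn W u - a) := by
        have hlb := Real.rpow_logb (by norm_num : (0:ℝ) < 2) (by norm_num : (2:ℝ) ≠ 1) hyP
        rw [← hlb]
        exact Real.rpow_le_rpow_of_exponent_le one_le_two (by linarith)
      have hsplit : prodP W u y = prodP W u y ^ (1 - s) * prodP W u y ^ s := by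
        rw [← Real.rpow_add hyP]
        norm_num
      calc prodP W u y = prodP W u y ^ (1 - s) * prodP W u y ^ s := hsplit
        _ ≤ prodP W u y ^ (1 - s) * (2:ℝ) ^ ((-Hn W u - a) * s) := by
            apply mul_le_mul_of_nonneg_left _ (Real.rpow_nonneg hyP.le _)
            calc prodP W u y ^ s ≤ ((2:ℝ) ^ (-Hn W u - a)) ^ s :=
                  Real.rpow_le_rpow hyP.le hPle hs0.le
              _ = (2:ℝ) ^ ((-Hn W u - a) * s) := by rw [← Real.rpow_mul (by norm_num)]
    calc ∑ y ∈ Slo, prodP W u y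
        ≤ ∑ y ∈ Slo, prodP W u y ^ (1 - s) * (2:ℝ) ^ ((-Hn W u - a) * s) :=
          Finset.sum_le_sum hterm
      _ = (2:ℝ) ^ ((-Hn W u - a) * s) * ∑ y ∈ Slo, prodP W u y ^ (1 - s) := by
          rw [← Finset.sum_mul]
          ring
      _ ≤ (2:ℝ) ^ ((-Hn W u - a) * s) * ∑ y : Fin n → Y, prodP W u y ^ (1 - s) := by
          apply mul_le_mul_of_nonneg_left _ (Real.rpow_nonneg (by norm_num) _)
          exact Finset.sum_le_sum_of_subset_of_nonneg (Finset.subset_univ _)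
            (fun y _ _ => Real.rpow_nonneg (hPnn y) _)
      _ ≤ (2:ℝ) ^ ((-Hn W u - a) * s) * Real.exp (s * (Real.log 2 * Hn W u) + n * (s ^ 2 / 2 * Tb)) :=
          mul_le_mul_of_nonneg_left hProdLow (Real.rpow_nonneg (by norm_num) _)
      _ = Real.exp (Real.log 2 * ((-Hn W u - a) * s) + (s * (Real.log 2 * Hn W u) + n * (s ^ 2 / 2 * Tb))) := by
          rw [Real.rpow_def_of_pos (by norm_num), ← Real.exp_add]
      _ = Real.exp (-(a * s * Real.log 2) + n * (s ^ 2 / 2 * Tb)) := by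
          congr 1
          ring
      _ = E := by rw [hEexp, hExpEq]
  have tail_hi : ∑ y ∈ Shi, prodP W u y ≤ E := by
    have hterm : ∀ y ∈ Shi, prodP W u y ≤ prodP W u y ^ (1 + s) * (2:ℝ) ^ ((-Hn W u + a) * (-s)) := by
      intro y hy
      obtain ⟨hyP, hylb⟩ := (Finset.mem_filter.mp hy).2
      have hPge : (2:ℝ) ^ (-Hn W u + a) ≤ prodP W u y := by
        have hlb := Real.rpow_logb (by norm_num : (0:ℝ) < 2) (by norm_num : (2:ℝ) ≠ 1) hyP
        rw [← hlb]
        exact Real.rpow_le_rpow_of_exponent_le one_le_two (by linarith)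
      have hsplit : prodP W u y = prodP W u y ^ (1 + s) * prodP W u y ^ (-s) := by
        rw [← Real.rpow_add hyP]
        norm_num
      calc prodP W u y = prodP W u y ^ (1 + s) * prodP W u y ^ (-s) := hsplit
        _ ≤ prodP W u y ^ (1 + s) * (2:ℝ) ^ ((-Hn W u + a) * (-s)) := by
            apply mul_le_mul_of_nonneg_left _ (Real.rpow_nonneg hyP.le _)
            calc prodP W u y ^ (-s) ≤ ((2:ℝ) ^ (-Hn W u + a)) ^ (-s) :=
                  Real.rpow_le_rpow_of_nonpos
                    (Real.rpow_pos_of_pos (by norm_num) _) hPge (by linarith)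
              _ = (2:ℝ) ^ ((-Hn W u + a) * (-s)) := by rw [← Real.rpow_mul (by norm_num)]
    calc ∑ y ∈ Shi, prodP W u y
        ≤ ∑ y ∈ Shi, prodP W u y ^ (1 + s) * (2:ℝ) ^ ((-Hn W u + a) * (-s)) :=
          Finset.sum_le_sum hterm
      _ = (2:ℝ) ^ ((-Hn W u + a) * (-s)) * ∑ y ∈ Shi, prodP W u y ^ (1 + s) := by
          rw [← Finset.sum_mul]
          ring
      _ ≤ (2:ℝ) ^ ((-Hn W u + a) * (-s)) * ∑ y : Fin n → Y, prodP W u y ^ (1 + s) := by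
          apply mul_le_mul_of_nonneg_left _ (Real.rpow_nonneg (by norm_num) _)
          exact Finset.sum_le_sum_of_subset_of_nonneg (Finset.subset_univ _)
            (fun y _ _ => Real.rpow_nonneg (hPnn y) _)
      _ ≤ (2:ℝ) ^ ((-Hn W u + a) * (-s)) * Real.exp (-(s * (Real.log 2 * Hn W u)) + n * (s ^ 2 / 2 * Tb)) :=
          mul_le_mul_of_nonneg_left hProdHigh (Real.rpow_nonneg (by norm_num) _)
      _ = Real.exp (Real.log 2 * ((-Hn W u + a) * (-s)) + (-(s * (Real.log 2 * Hn W u)) + n * (s ^ 2 / 2 * Tb))) := by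
          rw [Real.rpow_def_of_pos (by norm_num), ← Real.exp_add]
      _ = Real.exp (-(a * s * Real.log 2) + n * (s ^ 2 / 2 * Tb)) := by
          congr 1
          ring
      _ = E := by rw [hEexp, hExpEq]
  have hone : ∑ y ∈ typSet W u δ, prodP W u y + ∑ y ∈ (typSet W u δ)ᶜ, prodP W u y = 1 := by
    rw [Finset.sum_add_sum_compl, sum_prodP W hW u]
  have hdisj : Disjoint Slo Shi := by
    rw [Finset.disjoint_left]
    intro y h1 h2
    obtain ⟨_, h1b⟩ := (Finset.mem_filter.mp h1).2
    obtain ⟨_, h2b⟩ := (Finset.mem_filter.mp h2).2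
    linarith
  have hcompl_le : ∑ y ∈ (typSet W u δ)ᶜ, prodP W u y ≤ 2 * E := by
    have hre : ∑ y ∈ (typSet W u δ)ᶜ, prodP W u y
        = ∑ y ∈ ((typSet W u δ)ᶜ).filter (fun y => 0 < prodP W u y), prodP W u y := by
      rw [Finset.sum_filter_of_ne]
      intro y _ hne
      exact lt_of_le_of_ne (hPnn y) (Ne.symm hne)
    have hsub : ((typSet W u δ)ᶜ).filter (fun y => 0 < prodP W u y) ⊆ Slo ∪ Shi := by
      intro y hy
      obtain ⟨hyc, hyP⟩ := Finset.mem_filter.mp hy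
      have hyn : y ∉ typSet W u δ := Finset.mem_compl.mp hyc
      rw [typSet, Finset.mem_filter] at hyn
      push_neg at hyn
      have habs := hyn (Finset.mem_univ y) hyP
      rcases lt_abs.mp habs with h | h
      · apply Finset.mem_union_right
        rw [hShi, Finset.mem_filter]
        exact ⟨Finset.mem_univ y, hyP, h.le⟩
      · apply Finset.mem_union_left
        rw [hSlo, Finset.mem_filter]
        refine ⟨Finset.mem_univ y, hyP, by linarith⟩
    calc ∑ y ∈ (typSet W u δ)ᶜ, prodP W u y
        = ∑ y ∈ ((typSet W u δ)ᶜ).filter (fun y => 0 < prodP W u y), prodP W u y := hre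
      _ ≤ ∑ y ∈ Slo ∪ Shi, prodP W u y :=
          Finset.sum_le_sum_of_subset_of_nonneg hsub (fun y _ _ => hPnn y)
      _ = ∑ y ∈ Slo, prodP W u y + ∑ y ∈ Shi, prodP W u y := Finset.sum_union hdisj
      _ ≤ E + E := add_le_add tail_lo tail_hi
      _ = 2 * E := by ring
  have : probOf W u (typSet W u δ) = ∑ y ∈ typSet W u δ, prodP W u y := rfl
  rw [this]
  linarith

end DIProof

namespace DIProof
open Real Finset DIChannel

lemma sum_min_le {Z : Type*} [Fintype Z] {P Q : Z → ℝ} (hP : IsDist P) (hQ : IsDist Q)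
    (A : Finset Z) : ∑ z ∈ A, min (P z) (Q z) ≤ 1 - tvd P Q := by
  have hmin : ∀ z : Z, min (P z) (Q z) = (P z + Q z - |P z - Q z|) / 2 := by
    intro z
    rcases le_total (P z) (Q z) with h | h
    · rw [min_eq_left h, abs_of_nonpos (by linarith)]; ring
    · rw [min_eq_right h, abs_of_nonneg (by linarith)]; ring
  calc ∑ z ∈ A, min (P z) (Q z) ≤ ∑ z : Z, min (P z) (Q z) :=
        Finset.sum_le_sum_of_subset_of_nonneg (Finset.subset_univ _)
          (fun z _ _ => le_min (hP.1 z) (hQ.1 z))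
    _ = (∑ z : Z, P z + ∑ z : Z, Q z - ∑ z : Z, |P z - Q z|) / 2 := by
        simp only [hmin]
        rw [← Finset.sum_div, Finset.sum_sub_distrib, Finset.sum_add_distrib]
    _ = 1 - tvd P Q := by
        rw [hP.2, hQ.2, tvd]
        ring

lemma Hn_nonneg {X Y : Type*} [Fintype Y] (W : X → Y → ℝ) (hW : ∀ x, IsDist (W x))
    {n : ℕ} (u : Fin n → X) : 0 ≤ Hn W u :=
  Finset.sum_nonneg fun i _ => H2_nonneg (hW (u i))

lemma Hn_le {X Y : Type*} [Fintype Y] (W : X → Y → ℝ) (hW : ∀ x, IsDist (W x))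
    {n : ℕ} (u : Fin n → X) : Hn W u ≤ n * Real.logb 2 (Fintype.card Y) := by
  calc Hn W u ≤ ∑ _i : Fin n, Real.logb 2 (Fintype.card Y) :=
        Finset.sum_le_sum fun i _ => H2_le_logb (hW (u i))
    _ = n * Real.logb 2 (Fintype.card Y) := by
        rw [Finset.sum_const, Finset.card_univ, Fintype.card_fin, nsmul_eq_mul]

end DIProof

open DIProof

/-- Theorem (DI codes from packings, Theorem 5 of the paper): from `N` points whose output
distributions form a `2^{-3δ√n}`-packing in total variation one can extract a subset `𝒞` of
cardinality at least `N/⌈n log₂|𝒴|⌉` such that the typical sets yield an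
`(n,|𝒞|,λ₁,λ₂)`-DI code. -/
theorem stmt2 {X Y : Type*} [Fintype Y] (W : X → Y → ℝ) (hW : ∀ x, IsDist (W x))
    (n : ℕ) (hn : 1 ≤ n) (δ : ℝ) (hδ0 : 0 < δ)
    (hδ : δ ≤ Real.sqrt n * Real.logb 2 (Fintype.card Y))
    (N : ℕ) (u : Fin N → Fin n → X)
    (hsep : ∀ j k, j ≠ k →
      1 - tvd (prodP W (u j)) (prodP W (u k)) ≤ (2 : ℝ) ^ (-(3 * δ * Real.sqrt n))) :
    ∃ C : Finset (Fin N),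
      (N : ℝ) / (⌈(n : ℝ) * Real.logb 2 (Fintype.card Y)⌉₊ : ℝ) ≤ (C.card : ℝ) ∧
      (∀ j ∈ C,
        1 - 2 * (2 : ℝ) ^ (-δ ^ 2 / (36 * Kf (Fintype.card Y))) ≤
          probOf W (u j) (typSet W (u j) δ)) ∧
      (∀ j ∈ C, ∀ k ∈ C, j ≠ k →
        probOf W (u j) (typSet W (u k) δ) ≤
          2 * (2 : ℝ) ^ (-δ ^ 2 / (36 * Kf (Fintype.card Y))) +
            3 * (2 : ℝ) ^ (-(δ * Real.sqrt n))) := by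
  
  classical
  have hsqn0 : 0 < Real.sqrt n :=
    Real.sqrt_pos.mpr (by exact_mod_cast Nat.lt_of_lt_of_le Nat.zero_lt_one hn)
  have hlogb_pos : 0 < Real.logb 2 (Fintype.card Y) := by
    by_contra h
    push_neg at h
    have : Real.sqrt n * Real.logb 2 (Fintype.card Y) ≤ 0 :=
      mul_nonpos_of_nonneg_of_nonpos (Real.sqrt_nonneg _) h
    linarith
  have hd2 : 2 ≤ Fintype.card Y := by
    by_contra h
    push_neg at h
    interval_cases hcard : (Fintype.card Y) <;> simp [hcard] at hlogb_pos
  set M := ⌈(n : ℝ) * Real.logb 2 (Fintype.card Y)⌉₊ with hMdef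
  have hM1 : 1 ≤ M := by
    rw [hMdef]
    apply Nat.one_le_iff_ne_zero.mpr
    apply Nat.pos_iff_ne_zero.mp
    apply Nat.ceil_pos.mpr
    have hn1 : (1:ℝ) ≤ (n:ℝ) := by exact_mod_cast hn
    nlinarith
  have hMle : (n : ℝ) * Real.logb 2 (Fintype.card Y) ≤ (M : ℝ) := Nat.le_ceil _
  set f : Fin N → ℕ := fun j => min ⌊Hn W (u j)⌋₊ (M - 1) with hfdef
  have hfmem : ∀ j, f j ∈ Finset.range M := by
    intro j
    apply Finset.mem_range.mpr
    have h : f j ≤ M - 1 := min_le_right _ _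
    omega
  -- pigeonhole
  obtain ⟨c, hc⟩ : ∃ c : ℕ, (N : ℝ) / (M : ℝ) ≤ ((Finset.univ.filter (fun j => f j = c)).card : ℝ) := by
    by_contra h
    push_neg at h
    have hNsum : (Finset.univ : Finset (Fin N)).card
        = ∑ c ∈ Finset.range M, (Finset.univ.filter (fun j => f j = c)).card :=
      Finset.card_eq_sum_card_fiberwise (fun j _ => hfmem j)
    have hNr : (N : ℝ) = ∑ c ∈ Finset.range M, ((Finset.univ.filter (fun j => f j = c)).card : ℝ) := by
      rw [← Nat.cast_sum, ← hNsum, Finset.card_univ, Fintype.card_fin]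
    have hlt : ∑ c ∈ Finset.range M, ((Finset.univ.filter (fun j => f j = c)).card : ℝ)
        < ∑ _c ∈ Finset.range M, (N : ℝ) / (M : ℝ) :=
      Finset.sum_lt_sum_of_nonempty (Finset.nonempty_range_iff.mpr (by omega)) (fun c _ => h c)
    rw [Finset.sum_const, Finset.card_range, nsmul_eq_mul] at hlt
    have hM0 : (0:ℝ) < (M : ℝ) := by exact_mod_cast by omega
    rw [mul_div_cancel₀ _ hM0.ne'] at hlt
    linarith [hNr ▸ hlt]
  set C := Finset.univ.filter (fun j => f j = c) with hCdef
  -- entropy window for members of C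
  have hwin : ∀ j ∈ C, (c : ℝ) ≤ Hn W (u j) ∧ Hn W (u j) ≤ (c : ℝ) + 1 := by
    intro j hj
    have hfj : f j = c := (Finset.mem_filter.mp hj).2
    have hHnn : 0 ≤ Hn W (u j) := Hn_nonneg W hW (u j)
    constructor
    · have hcle : c ≤ ⌊Hn W (u j)⌋₊ := by
        rw [← hfj]
        exact min_le_left _ _
      calc (c : ℝ) ≤ (⌊Hn W (u j)⌋₊ : ℝ) := by exact_mod_cast hcle
        _ ≤ Hn W (u j) := Nat.floor_le hHnn
    · by_cases hcase : ⌊Hn W (u j)⌋₊ ≤ M - 1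
      · have : f j = ⌊Hn W (u j)⌋₊ := by rw [hfdef]; simp [min_eq_left hcase]
        have hcf : c = ⌊Hn W (u j)⌋₊ := by omega
        have := Nat.lt_floor_add_one (Hn W (u j))
        have hlt : Hn W (u j) < (⌊Hn W (u j)⌋₊ : ℝ) + 1 := by exact_mod_cast this
        rw [hcf]
        push_cast
        linarith
      · have : f j = M - 1 := by rw [hfdef]; simp [min_eq_right (by omega : M - 1 ≤ ⌊Hn W (u j)⌋₊)]
        have hcf : c = M - 1 := by omega
        have hHle : Hn W (u j) ≤ (M : ℝ) := le_trans (Hn_le W hW (u j)) hMle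
        have : ((M : ℝ) - 1) + 1 = (M:ℝ) := by ring
        have hcast : ((M - 1 : ℕ) : ℝ) = (M : ℝ) - 1 := by
          have : (1:ℕ) ≤ M := hM1
          push_cast [Nat.cast_sub this]
          ring
        rw [hcf, hcast]
        linarith
  refine ⟨C, hc, ?_, ?_⟩
  · intro j _
    exact concentration W hW hn hδ0 hδ hd2 (u j)
  · intro j hj k hk hjk
    set E : ℝ := (2:ℝ) ^ (-δ ^ 2 / (36 * Kf (Fintype.card Y))) with hEdef
    set a : ℝ := δ * Real.sqrt n with hadef
    have ha0 : 0 < a := by positivity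
    set Tj := typSet W (u j) δ with hTj
    set Tk := typSet W (u k) δ with hTk
    have hHjk : Hn W (u k) ≤ Hn W (u j) + 1 := by
      obtain ⟨h1, h2⟩ := hwin j hj
      obtain ⟨h3, h4⟩ := hwin k hk
      linarith
    -- split the sum
    have hsplit : probOf W (u j) Tk
        = ∑ y ∈ Tk ∩ Tj, prodP W (u j) y + ∑ y ∈ Tk \ Tj, prodP W (u j) y := by
      rw [probOf, Finset.sum_inter_add_sum_sdiff]
    have hPjnn : ∀ y, 0 ≤ prodP W (u j) y := prodP_nonneg W (fun x b => (hW x).1 b) (u j)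
    -- diff part
    have hdiff : ∑ y ∈ Tk \ Tj, prodP W (u j) y ≤ 2 * E := by
      have hsub : Tk \ Tj ⊆ Tjᶜ := by
        intro y hy
        exact Finset.mem_compl.mpr (Finset.mem_sdiff.mp hy).2
      have h1 : ∑ y ∈ Tk \ Tj, prodP W (u j) y ≤ ∑ y ∈ Tjᶜ, prodP W (u j) y :=
        Finset.sum_le_sum_of_subset_of_nonneg hsub (fun y _ _ => hPjnn y)
      have h2 : ∑ y ∈ Tj, prodP W (u j) y + ∑ y ∈ Tjᶜ, prodP W (u j) y = 1 := by
        rw [Finset.sum_add_sum_compl, sum_prodP W hW (u j)]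
      have h3 := concentration W hW hn hδ0 hδ hd2 (u j)
      have h4 : probOf W (u j) Tj = ∑ y ∈ Tj, prodP W (u j) y := rfl
      rw [← hEdef] at h3
      linarith [h4 ▸ h3]
    -- intersection part
    have hfac0 : (0:ℝ) < (2:ℝ) ^ (1 + 2 * a) := Real.rpow_pos_of_pos (by norm_num) _
    have hinter : ∑ y ∈ Tk ∩ Tj, prodP W (u j) y ≤ 2 * (2:ℝ) ^ (-a) := by
      have hpt : ∀ y ∈ Tk ∩ Tj, prodP W (u j) y ≤ (2:ℝ) ^ (1 + 2 * a) * min (prodP W (u j) y) (prodP W (u k) y) := by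
        intro y hy
        obtain ⟨hyk, hyj⟩ := Finset.mem_inter.mp hy
        rw [hTj, typSet, Finset.mem_filter] at hyj
        rw [hTk, typSet, Finset.mem_filter] at hyk
        obtain ⟨-, hPjpos, hPjabs⟩ := hyj
        obtain ⟨-, hPkpos, hPkabs⟩ := hyk
        have habs1 : Real.logb 2 (prodP W (u j) y) ≤ -Hn W (u j) + a := by
          have := abs_le.mp hPjabs
          rw [← hadef] at this
          linarith [this.2]
        have habs2 : -Hn W (u k) - a ≤ Real.logb 2 (prodP W (u k) y) := by
          have := abs_le.mp hPkabs
          rw [← hadef] at this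
          linarith [this.1]
        have hPjle : prodP W (u j) y ≤ (2:ℝ) ^ (-Hn W (u j) + a) := by
          have hlb := Real.rpow_logb (by norm_num : (0:ℝ) < 2) (by norm_num : (2:ℝ) ≠ 1) hPjpos
          rw [← hlb]
          exact Real.rpow_le_rpow_of_exponent_le one_le_two habs1
        have hPkge : (2:ℝ) ^ (-Hn W (u j) - 1 - a) ≤ prodP W (u k) y := by
          have hlb := Real.rpow_logb (by norm_num : (0:ℝ) < 2) (by norm_num : (2:ℝ) ≠ 1) hPkpos
          rw [← hlb]
          exact Real.rpow_le_rpow_of_exponent_le one_le_two (by linarith)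
        rcases le_total (prodP W (u j) y) (prodP W (u k) y) with hmin | hmin
        · rw [min_eq_left hmin]
          have h1 : (1:ℝ) ≤ (2:ℝ) ^ (1 + 2*a) :=
            Real.one_le_rpow (by norm_num) (by linarith)
          nlinarith [hPjnn y]
        · rw [min_eq_right hmin]
          calc prodP W (u j) y ≤ (2:ℝ) ^ (-Hn W (u j) + a) := hPjle
            _ = (2:ℝ) ^ (1 + 2*a) * (2:ℝ) ^ (-Hn W (u j) - 1 - a) := by
                rw [← Real.rpow_add (by norm_num : (0:ℝ) < 2)]
                congr 1
                ring
            _ ≤ (2:ℝ) ^ (1 + 2*a) * prodP W (u k) y :=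
                mul_le_mul_of_nonneg_left hPkge hfac0.le
      calc ∑ y ∈ Tk ∩ Tj, prodP W (u j) y ≤ ∑ y ∈ Tk ∩ Tj, (2:ℝ) ^ (1 + 2*a) * min (prodP W (u j) y) (prodP W (u k) y) :=
            Finset.sum_le_sum hpt
        _ = (2:ℝ) ^ (1 + 2*a) * ∑ y ∈ Tk ∩ Tj, min (prodP W (u j) y) (prodP W (u k) y) := by
            rw [Finset.mul_sum]
        _ ≤ (2:ℝ) ^ (1 + 2*a) * (1 - tvd (prodP W (u j)) (prodP W (u k))) := by
            apply mul_le_mul_of_nonneg_left _ hfac0.le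
            exact sum_min_le (isDist_prodP W hW (u j)) (isDist_prodP W hW (u k)) _
        _ ≤ (2:ℝ) ^ (1 + 2*a) * (2:ℝ) ^ (-(3 * δ * Real.sqrt n)) := by
            apply mul_le_mul_of_nonneg_left _ hfac0.le
            exact hsep j k hjk
        _ = 2 * (2:ℝ) ^ (-a) := by
            rw [← Real.rpow_add (by norm_num : (0:ℝ) < 2)]
            rw [show (1 + 2*a) + (-(3 * δ * Real.sqrt n)) = 1 + (-a) by rw [hadef]; ring]
            rw [Real.rpow_add (by norm_num : (0:ℝ) < 2) 1 (-a), Real.rpow_one]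
    have hEpos : (0:ℝ) < (2:ℝ) ^ (-a) := Real.rpow_pos_of_pos (by norm_num) _
    have hfinal : probOf W (u j) Tk ≤ 2 * E + 3 * (2:ℝ) ^ (-a) := by
      rw [hsplit]
      linarith
    rw [hadef] at hfinal
    exact hfinal
end

section
/- There exist nonempty compact sets F, G ⊆ [0,1] such that the lower Minkowski dimensions satisfy d̲_M(F) = 0 and d̲_M(G) = 0, the sumset satisfies F + G = [0,1], and consequently d̲_M(F × G) ≥ 1, where F × G ⊆ ℝ² carries the Euclidean metric. -/
open Pointwise

/-- Covering number `Γ_δ(F)`: the minimal number of closed balls of radius `δ` with centers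
in `F` whose union contains `F`; `⊤` if no finite such cover exists. -/
noncomputable def coverNum {α : Type*} [PseudoMetricSpace α] (F : Set α) (δ : ℝ) : ℕ∞ :=
  sInf {n : ℕ∞ | ∃ s : Finset α, ↑s ⊆ F ∧ (s.card : ℕ∞) = n ∧
    F ⊆ ⋃ x ∈ s, Metric.closedBall x δ}

/-- Lower Minkowski dimension `d̲_M(F) = liminf_{δ→0⁺} log Γ_δ(F)/(−log δ)`. -/
noncomputable def lowerMinkDim {α : Type*} [PseudoMetricSpace α] (F : Set α) : ℝ :=
  Filter.liminf (fun δ : ℝ => Real.log ((coverNum F δ).toNat : ℝ) / (-Real.log δ))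
    (nhdsWithin 0 (Set.Ioi 0))

namespace Stmt15

/-- weight of digit i -/
noncomputable def w (i : ℕ) : ℝ := (2:ℝ)⁻¹ ^ (i+1)

lemma w_pos (i : ℕ) : 0 < w i := by unfold w; positivity

lemma summable_w : Summable w := by
  have h : Summable (fun i : ℕ => (2:ℝ)⁻¹ ^ i) :=
    summable_geometric_of_lt_one (by norm_num) (by norm_num)
  exact (h.mul_right (2:ℝ)⁻¹).congr fun i => (pow_succ _ _).symm

lemma tsum_w : ∑' i, w i = 1 := by
  have h : ∑' i : ℕ, (2:ℝ)⁻¹ ^ i = 2 := by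
    rw [tsum_geometric_of_lt_one (by norm_num) (by norm_num)]; norm_num
  calc ∑' i, w i = ∑' i, (2:ℝ)⁻¹ ^ i * (2:ℝ)⁻¹ := by simp [w, pow_succ]
    _ = 2 * (2:ℝ)⁻¹ := by rw [tsum_mul_right, h]
    _ = 1 := by norm_num

noncomputable def val (f : ℕ → Bool) : ℝ := ∑' i, (if f i then w i else 0)

lemma summable_term (f : ℕ → Bool) : Summable (fun i => if f i then w i else 0) := by
  apply Summable.of_nonneg_of_le (fun i => by split <;> simp [le_of_lt (w_pos i)])
    (fun i => by split <;> simp [le_of_lt (w_pos i), le_refl]) summable_w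


lemma val_nonneg (f : ℕ → Bool) : 0 ≤ val f :=
  tsum_nonneg fun i => by split <;> simp [le_of_lt (w_pos i)]

lemma val_le_one (f : ℕ → Bool) : val f ≤ 1 := by
  rw [← tsum_w]
  exact Summable.tsum_le_tsum (fun i => by split <;> simp [le_of_lt (w_pos i)]) (summable_term f) summable_w

lemma tsum_w_tail (n : ℕ) : ∑' i, (if n ≤ i then w i else 0) = (2:ℝ)⁻¹ ^ n := by
  have hs : Summable (fun i => if n ≤ i then w i else 0) :=
    Summable.of_nonneg_of_le (fun i => by split <;> simp [le_of_lt (w_pos i)])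
      (fun i => by split <;> simp [le_of_lt (w_pos i)]) summable_w
  have h1 := Summable.sum_add_tsum_nat_add (f := fun i => if n ≤ i then w i else 0) n hs
  have h2 : ∑ i ∈ Finset.range n, (if n ≤ i then w i else 0) = 0 := by
    apply Finset.sum_eq_zero; intro i hi
    simp [Nat.not_le.mpr (Finset.mem_range.mp hi)]
  have h3 : ∑' i : ℕ, (if n ≤ i + n then w (i + n) else 0) = (2:ℝ)⁻¹ ^ n := by
    have : ∀ i : ℕ, (if n ≤ i + n then w (i + n) else 0) = (2:ℝ)⁻¹ ^ n * w i := by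
      intro i
      rw [if_pos (Nat.le_add_left n i)]
      unfold w; rw [← pow_add]; ring_nf
    rw [tsum_congr this, tsum_mul_left, tsum_w, mul_one]
  rw [← h1, h2, zero_add, h3]

/-- truncation of a digit function below n -/
def trunc (f : ℕ → Bool) (n : ℕ) : ℕ → Bool := fun i => f i && decide (i < n)

lemma val_trunc_dist (f : ℕ → Bool) (n : ℕ) :
    0 ≤ val f - val (trunc f n) ∧ val f - val (trunc f n) ≤ (2:ℝ)⁻¹ ^ n := by
  have hsum : ∀ g : ℕ → Bool, Summable (fun i => if g i then w i else 0) := summable_term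
  have hs2 : Summable (fun i => if f i ∧ n ≤ i then w i else 0) :=
    Summable.of_nonneg_of_le (fun i => by split <;> simp [le_of_lt (w_pos i)])
      (fun i => by split <;> simp [le_of_lt (w_pos i)]) summable_w
  have key : val f = val (trunc f n) + ∑' i, (if f i ∧ n ≤ i then w i else 0) := by
    unfold val
    rw [← Summable.tsum_add (hsum _) hs2]
    apply tsum_congr; intro i
    by_cases hf : f i
    · by_cases hlt : i < n
      · simp [trunc, hf, hlt, Nat.not_le.mpr hlt]
      · simp [trunc, hf, hlt, Nat.le_of_not_lt hlt]
    · simp [trunc, hf]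
  constructor
  · rw [key]; ring_nf
    have : 0 ≤ ∑' i, (if f i ∧ n ≤ i then w i else 0) :=
      tsum_nonneg fun i => by split <;> simp [le_of_lt (w_pos i)]
    linarith
  · rw [key]
    have : ∑' i, (if f i ∧ n ≤ i then w i else 0) ≤ (2:ℝ)⁻¹ ^ n := by
      rw [← tsum_w_tail n]
      apply Summable.tsum_le_tsum _ hs2
      · exact Summable.of_nonneg_of_le (fun i => by split <;> simp [le_of_lt (w_pos i)])
          (fun i => by split <;> simp [le_of_lt (w_pos i)]) summable_w
      · intro i
        by_cases h : f i ∧ n ≤ i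
        · simp [h, h.2]
        · split <;> [skip; (split <;> simp [le_of_lt (w_pos i)])]
          · exact absurd ‹_› h
    linarith

lemma val_finsupp (f : ℕ → Bool) (s : Finset ℕ) (h : ∀ i, f i = true → i ∈ s) :
    val f = ∑ i ∈ s, (if f i then w i else 0) := by
  apply tsum_eq_sum
  intro i hi
  by_cases hf : f i
  · exact absurd (h i hf) hi
  · simp [hf]

/-- set of reals with binary digits supported in `{i | b i}` -/
noncomputable def K (b : ℕ → Bool) : Set ℝ :=
  val '' {f : ℕ → Bool | ∀ i, f i = true → b i = true}

lemma K_nonempty (b : ℕ → Bool) : (K b).Nonempty :=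
  ⟨val (fun _ => false), ⟨fun _ => false, fun i h => by simp at h, rfl⟩⟩

lemma K_subset (b : ℕ → Bool) : K b ⊆ Set.Icc 0 1 := by
  rintro x ⟨f, -, rfl⟩
  exact ⟨val_nonneg f, val_le_one f⟩

lemma continuous_val : Continuous val := by
  apply continuous_tsum (u := w) _ summable_w
  · intro i f
    rw [Real.norm_eq_abs, abs_of_nonneg (by split <;> simp [le_of_lt (w_pos i)])]
    split <;> simp [le_of_lt (w_pos i)]
  · intro i
    exact (continuous_of_discreteTopology (f := fun x : Bool => if x then w i else 0)).comp
      (continuous_apply i)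

lemma K_compact (b : ℕ → Bool) : IsCompact (K b) := by
  have hc : IsClosed {f : ℕ → Bool | ∀ i, f i = true → b i = true} := by
    have : {f : ℕ → Bool | ∀ i, f i = true → b i = true} =
        ⋂ i, (fun f : ℕ → Bool => f i) ⁻¹' {x | x = true → b i = true} := by
      ext f; simp
    rw [this]
    exact isClosed_iInter fun i => (isClosed_discrete _).preimage (continuous_apply i)
  exact (hc.isCompact).image continuous_val
lemma val_false : val (fun _ => false) = 0 := by
  unfold val; simp

lemma val_true : val (fun _ => true) = 1 := by
  unfold val; simpa using tsum_w

/-- prepend a digit to a digit function -/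
def shift (d : Bool) (f : ℕ → Bool) : ℕ → Bool :=
  fun i => Nat.rec d (fun j _ => f j) i

lemma val_shift (d : Bool) (f : ℕ → Bool) :
    val (shift d f) = ((if d then 1 else 0) + val f) / 2 := by
  unfold val
  rw [Summable.tsum_eq_zero_add (summable_term (shift d f))]
  have h0 : shift d f 0 = d := rfl
  have h1 : (if shift d f 0 then w 0 else 0) = (if d then 1 else 0) / 2 := by
    rw [h0]; cases d
    · simp
    · simp [w]; try norm_num
  have h2 : ∀ i : ℕ, (if shift d f (i + 1) then w (i + 1) else 0)
      = (if f i then w i else 0) / 2 := by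
    intro i
    have : shift d f (i + 1) = f i := rfl
    rw [this]
    have hw : w (i + 1) = w i / 2 := by unfold w; rw [pow_succ]; ring
    split <;> simp [hw]
  rw [tsum_congr h2]
  have : ∑' i, (if f i then w i else 0) / 2 = (∑' i, (if f i then w i else 0)) / 2 := by
    simp only [div_eq_mul_inv]; exact tsum_mul_right
  rw [this, h1]
  ring

lemma dyadic_mem_V (n : ℕ) : ∀ m : ℕ, m ≤ 2 ^ n → ∃ f : ℕ → Bool, (m : ℝ) / 2 ^ n = val f := by
  induction n with
  | zero =>
    intro m hm
    interval_cases m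
    · exact ⟨fun _ => false, by simp [val_false]⟩
    · exact ⟨fun _ => true, by simp [val_true]⟩
  | succ n ih =>
    intro m hm
    by_cases h : m ≤ 2 ^ n
    · obtain ⟨f, hf⟩ := ih m h
      refine ⟨shift false f, ?_⟩
      rw [val_shift, ← hf]
      have he : ((if (false : Bool) then (1:ℝ) else 0)) = 0 := rfl
      rw [he, pow_succ]
      ring
    · push_neg at h
      have h2 : m - 2 ^ n ≤ 2 ^ n := by
        rw [pow_succ] at hm; omega
      obtain ⟨f, hf⟩ := ih (m - 2 ^ n) h2
      refine ⟨shift true f, ?_⟩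
      rw [val_shift, ← hf]
      have he : ((if (true : Bool) then (1:ℝ) else 0)) = 1 := rfl
      rw [he]
      have hc : ((m - 2 ^ n : ℕ) : ℝ) = (m : ℝ) - 2 ^ n := by
        have h' : (2:ℕ) ^ n ≤ m := h.le
        push_cast [h']
        try ring
      rw [hc, pow_succ]
      have : (2:ℝ) ^ n > 0 := by positivity
      field_simp
      try ring

lemma V_eq : K (fun _ => true) = Set.Icc 0 1 := by
  apply Set.Subset.antisymm (K_subset _)
  have hclosed : IsClosed (K (fun _ => true)) := (K_compact _).isClosed
  intro x hx
  rw [← hclosed.closure_eq]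
  rw [Metric.mem_closure_iff]
  intro ε hε
  obtain ⟨n, hn⟩ := exists_pow_lt_of_lt_one hε (by norm_num : (1:ℝ)/2 < 1)
  set m : ℕ := ⌊x * 2 ^ n⌋.toNat with hm
  have hx0 : 0 ≤ x := hx.1
  have hx1 : x ≤ 1 := hx.2
  have hfl : (0:ℤ) ≤ ⌊x * 2 ^ n⌋ := Int.floor_nonneg.mpr (by positivity)
  have hmle : m ≤ 2 ^ n := by
    have h1 : x * 2 ^ n ≤ (((2:ℤ) ^ n : ℤ) : ℝ) := by
      push_cast
      nlinarith [pow_pos (by norm_num : (0:ℝ) < 2) n]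
    have h2 : ⌊x * 2 ^ n⌋ ≤ (2:ℤ) ^ n := by
      have := Int.floor_le_floor h1
      rwa [Int.floor_intCast] at this
    exact Int.toNat_le.mpr (by exact_mod_cast h2)
  obtain ⟨f, hf⟩ := dyadic_mem_V n m hmle
  refine ⟨val f, ⟨f, fun i _ => rfl, rfl⟩, ?_⟩
  rw [← hf]
  have hmr : (m : ℝ) = ⌊x * 2 ^ n⌋ := by
    rw [hm]; exact_mod_cast Int.toNat_of_nonneg hfl
  have h2n : (0:ℝ) < 2 ^ n := by positivity
  have hd1 : x * 2 ^ n - 1 < (m:ℝ) := by rw [hmr]; linarith [Int.sub_one_lt_floor (x * 2 ^ n)]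
  have hd2 : (m:ℝ) ≤ x * 2 ^ n := by rw [hmr]; exact Int.floor_le _
  rw [Real.dist_eq, abs_lt]
  constructor
  · have : (m:ℝ)/2^n ≤ x := by rw [div_le_iff₀ h2n]; linarith
    linarith
  · have : x - (m:ℝ)/2^n < 1/2^n := by
      rw [sub_lt_iff_lt_add, ← add_div, lt_div_iff₀ h2n] at *
      nlinarith
    calc x - (m:ℝ)/2^n < 1/2^n := this
      _ = (1/2)^n := by rw [div_pow, one_pow]
      _ < ε := hn

lemma val_add_of_disjoint (f g : ℕ → Bool) (h : ∀ i, ¬(f i = true ∧ g i = true)) :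
    val f + val g = val (fun i => f i || g i) := by
  unfold val
  rw [← Summable.tsum_add (summable_term f) (summable_term g)]
  apply tsum_congr
  intro i
  by_cases hf : f i <;> by_cases hg : g i
  · exact absurd ⟨hf, hg⟩ (h i)
  · simp [hf, hg]
  · simp [hf, hg]
  · simp [hf, hg]

lemma K_add_K (b : ℕ → Bool) : K b + K (fun i => !(b i)) = Set.Icc 0 1 := by
  rw [← V_eq]
  apply Set.Subset.antisymm
  · rintro z ⟨x, ⟨f, hfb, rfl⟩, y, ⟨g, hgb, rfl⟩, rfl⟩
    have hdisj : ∀ i, ¬(f i = true ∧ g i = true) := by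
      intro i ⟨h1, h2⟩
      have := hfb i h1; have := hgb i h2
      simp_all
    show val f + val g ∈ K fun _ => true
    rw [val_add_of_disjoint f g hdisj]
    exact ⟨_, fun i _ => rfl, rfl⟩
  · rintro z ⟨h, -, rfl⟩
    refine ⟨val (fun i => h i && b i), ⟨_, fun i hi => by
        simpa using (Bool.and_eq_true _ _ |>.mp hi).2, rfl⟩,
      val (fun i => h i && !(b i)), ⟨_, fun i hi => by
        simpa using (Bool.and_eq_true _ _ |>.mp hi).2, rfl⟩, ?_⟩
    show val (fun i => h i && b i) + val (fun i => h i && !b i) = val h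
    rw [val_add_of_disjoint]
    · apply congrArg
      funext i
      cases h i <;> cases b i <;> rfl
    · intro i ⟨h1, h2⟩
      cases h i <;> cases b i <;> simp_all
noncomputable def cardfree (b : ℕ → Bool) (n : ℕ) : ℕ :=
  ((Finset.range n).filter (fun i => b i = true)).card

lemma coverNum_K_le (b : ℕ → Bool) (n : ℕ) :
    coverNum (K b) ((2:ℝ)⁻¹ ^ n) ≤ ((2 ^ cardfree b n : ℕ) : ℕ∞) := by
  classical
  set T := (Finset.range n).filter (fun i => b i = true) with hT
  set S : Finset ℝ := T.powerset.image (fun t => val (fun i => decide (i ∈ t))) with hS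
  have hsub : ↑S ⊆ K b := by
    intro x hx
    simp only [hS, Finset.coe_image, Set.mem_image, Finset.mem_coe, Finset.mem_powerset] at hx
    obtain ⟨t, ht, rfl⟩ := hx
    refine ⟨_, fun i hi => ?_, rfl⟩
    have hit : i ∈ t := by simpa using hi
    have := ht hit
    simp [hT] at this
    exact this.2
  have hcover : K b ⊆ ⋃ x ∈ S, Metric.closedBall x ((2:ℝ)⁻¹ ^ n) := by
    rintro x ⟨f, hf, rfl⟩
    set t : Finset ℕ := (Finset.range n).filter (fun i => f i = true) with ht
    have htT : t ⊆ T := by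
      intro i hi
      simp [ht] at hi
      simp [hT]
      exact ⟨hi.1, hf i hi.2⟩
    have heq : (fun i => decide (i ∈ t)) = trunc f n := by
      funext i
      by_cases h1 : f i = true <;> by_cases h2 : i < n <;>
        simp [ht, trunc, Finset.mem_filter, Finset.mem_range, h1, h2]
    have hmem : val (trunc f n) ∈ S := by
      rw [← heq]
      exact Finset.mem_image_of_mem _ (Finset.mem_powerset.mpr htT)
    apply Set.mem_biUnion hmem
    rw [Metric.mem_closedBall, Real.dist_eq]
    obtain ⟨h1, h2⟩ := val_trunc_dist f n
    rw [abs_of_nonneg h1]; exact h2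
  calc coverNum (K b) ((2:ℝ)⁻¹ ^ n) ≤ (S.card : ℕ∞) := sInf_le ⟨S, hsub, rfl, hcover⟩
    _ ≤ ((2 ^ cardfree b n : ℕ) : ℕ∞) := by
        have hle : S.card ≤ 2 ^ cardfree b n := by
          calc S.card ≤ T.powerset.card := Finset.card_image_le
            _ = 2 ^ T.card := Finset.card_powerset T
            _ = 2 ^ cardfree b n := rfl
        exact_mod_cast hle

lemma log_nat_nonneg (k : ℕ) : 0 ≤ Real.log k := by
  cases k with
  | zero => simp
  | succ k => exact Real.log_nonneg (by exact_mod_cast Nat.one_le_iff_ne_zero.mpr (Nat.succ_ne_zero k))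

lemma ratio_nonneg {α : Type*} [PseudoMetricSpace α] (F : Set α) {δ : ℝ} (h0 : 0 < δ) (h1 : δ < 1) :
    0 ≤ Real.log ((coverNum F δ).toNat : ℝ) / (-Real.log δ) := by
  apply div_nonneg (log_nat_nonneg _)
  have := Real.log_neg h0 h1
  linarith

lemma lowerMinkDim_K_zero (b : ℕ → Bool)
    (H : ∀ ε : ℝ, 0 < ε → ∀ N : ℕ, ∃ n, N ≤ n ∧ (cardfree b n : ℝ) ≤ ε * n) :
    lowerMinkDim (K b) = 0 := by
  set l := nhdsWithin (0:ℝ) (Set.Ioi 0) with hl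
  set u := fun δ : ℝ => Real.log (((coverNum (K b) δ).toNat : ℝ)) / (-Real.log δ) with hu
  have hIoo : Set.Ioo (0:ℝ) 1 ∈ l := Ioo_mem_nhdsGT_of_mem ⟨le_refl 0, one_pos⟩
  have hpos : ∀ᶠ δ in l, 0 ≤ u δ := by
    filter_upwards [hIoo] with δ hδ
    exact ratio_nonneg _ hδ.1 hδ.2
  have hbdd : Filter.IsBoundedUnder (· ≥ ·) l u := ⟨0, by simpa using hpos⟩
  have key : ∀ ε : ℝ, 0 < ε → ∃ᶠ δ in l, u δ ≤ ε := by
    intro ε hε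
    rw [Filter.frequently_iff]
    intro U hU
    obtain ⟨a, ha, hsub⟩ := mem_nhdsGT_iff_exists_Ioo_subset.mp hU
    obtain ⟨N, hN⟩ := exists_pow_lt_of_lt_one (Set.mem_Ioi.mp ha) (by norm_num : (2:ℝ)⁻¹ < 1)
    obtain ⟨n, hn1, hn2⟩ := H ε hε (max N 1)
    have hnN : N ≤ n := le_trans (le_max_left _ _) hn1
    have hn1' : 1 ≤ n := le_trans (le_max_right _ _) hn1
    set δ := (2:ℝ)⁻¹ ^ n with hδ
    have hδ0 : 0 < δ := by positivity
    have hδa : δ < a := lt_of_le_of_lt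
      (pow_le_pow_of_le_one (by norm_num) (by norm_num) hnN) hN
    refine ⟨δ, hsub ⟨hδ0, hδa⟩, ?_⟩
    -- estimate u δ
    have hfin : ((2 ^ cardfree b n : ℕ) : ℕ∞) ≠ ⊤ := ENat.coe_ne_top _
    have h1 : (coverNum (K b) δ).toNat ≤ 2 ^ cardfree b n := by
      have h := ENat.toNat_le_toNat (coverNum_K_le b n) hfin
      rw [ENat.toNat_coe] at h
      exact h
    have hlog2 : (0:ℝ) < Real.log 2 := Real.log_pos (by norm_num)
    have hden : -Real.log δ = n * Real.log 2 := by
      rw [hδ, Real.log_pow, Real.log_inv]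
      push_cast; ring
    have hnum : Real.log ((coverNum (K b) δ).toNat : ℝ) ≤ (cardfree b n : ℝ) * Real.log 2 := by
      rcases Nat.eq_zero_or_pos (coverNum (K b) δ).toNat with h0 | h0
      · rw [h0]
        simp
        positivity
      · calc Real.log ((coverNum (K b) δ).toNat : ℝ)
            ≤ Real.log ((2 ^ cardfree b n : ℕ) : ℝ) := by
              apply Real.log_le_log (by exact_mod_cast h0) (by exact_mod_cast h1)
          _ = (cardfree b n : ℝ) * Real.log 2 := by
              push_cast
              rw [Real.log_pow]
    have hn0 : (0:ℝ) < (n:ℝ) := by exact_mod_cast hn1'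
    rw [hu]
    show Real.log (((coverNum (K b) δ).toNat : ℝ)) / (-Real.log δ) ≤ ε
    rw [hden, div_le_iff₀ (by positivity)]
    calc Real.log ((coverNum (K b) δ).toNat : ℝ) ≤ (cardfree b n : ℝ) * Real.log 2 := hnum
      _ ≤ (ε * n) * Real.log 2 := by nlinarith
      _ = ε * ((n:ℝ) * Real.log 2) := by ring
  have h1 : lowerMinkDim (K b) ≤ 0 := by
    have : ∀ ε : ℝ, 0 < ε → lowerMinkDim (K b) ≤ ε := fun ε hε =>
      Filter.liminf_le_of_frequently_le (key ε hε) hbdd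
    by_contra hc
    push_neg at hc
    exact absurd (this _ (half_pos hc)) (by linarith)
  have h2 : 0 ≤ lowerMinkDim (K b) :=
    Filter.le_liminf_of_le (Filter.IsCoboundedUnder.of_frequently_le (key 1 one_pos)) hpos
  linarith
open scoped Nat

/-- level of digit i : the largest k with k! ≤ i+1 -/
def L (i : ℕ) : ℕ := Nat.findGreatest (fun k => k ! ≤ i + 1) (i + 1)

lemma L_spec (i : ℕ) : (L i)! ≤ i + 1 := by
  have := Nat.findGreatest_spec (P := fun k => k ! ≤ i + 1) (m := 1)
    (Nat.one_le_iff_ne_zero.mpr (Nat.succ_ne_zero i)) (by simp [Nat.factorial])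
  exact this

lemma L_succ (i : ℕ) : i + 1 < (L i + 1)! := by
  by_cases h : L i + 1 ≤ i + 1
  · have := Nat.findGreatest_is_greatest (P := fun k => k ! ≤ i + 1)
      (k := L i + 1) (Nat.lt_succ_self _) h
    omega
  · push_neg at h
    calc i + 1 < L i + 1 := h
      _ ≤ (L i + 1)! := Nat.self_le_factorial _

lemma L_lt (i m : ℕ) (h : i + 1 < m !) : L i < m := by
  by_contra hc
  push_neg at hc
  have := Nat.factorial_le hc
  have := L_spec i
  omega

/-- free digits of F -/
def bF : ℕ → Bool := fun i => decide (Even (L i))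

lemma cardfree_bF (k : ℕ) : cardfree bF ((2*k+2)! - 1) ≤ (2*k+1)! := by
  unfold cardfree
  have hsub : (Finset.range ((2*k+2)! - 1)).filter (fun i => bF i = true)
      ⊆ Finset.range ((2*k+1)!) := by
    intro i hi
    rw [Finset.mem_filter, Finset.mem_range] at hi
    obtain ⟨hi1, hi2⟩ := hi
    have he : Even (L i) := by simpa [bF] using hi2
    have hfpos : 0 < (2*k+2)! := Nat.factorial_pos _
    have hlt : i + 1 < (2*k+2)! := by omega
    have hL : L i < 2*k+2 := L_lt i _ hlt
    have hLe : L i ≤ 2*k := by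
      obtain ⟨r, hr⟩ := he
      omega
    have : i + 1 < (L i + 1)! := L_succ i
    have hle2 : (L i + 1)! ≤ (2*k+1)! := Nat.factorial_le (by omega)
    rw [Finset.mem_range]
    omega
  calc _ ≤ (Finset.range ((2*k+1)!)).card := Finset.card_le_card hsub
    _ = (2*k+1)! := Finset.card_range _

lemma cardfree_bG (k : ℕ) (hk : 1 ≤ k) :
    cardfree (fun i => !(bF i)) ((2*k+1)! - 1) ≤ (2*k)! := by
  unfold cardfree
  have hsub : (Finset.range ((2*k+1)! - 1)).filter (fun i => (!(bF i)) = true)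
      ⊆ Finset.range ((2*k)!) := by
    intro i hi
    rw [Finset.mem_filter, Finset.mem_range] at hi
    obtain ⟨hi1, hi2⟩ := hi
    have he : ¬ Even (L i) := by simpa [bF] using hi2
    have hfpos : 0 < (2*k+1)! := Nat.factorial_pos _
    have hlt : i + 1 < (2*k+1)! := by omega
    have hL : L i < 2*k+1 := L_lt i _ hlt
    have hLe : L i ≤ 2*k - 1 := by
      rcases Nat.even_or_odd (L i) with h | h
      · exact absurd h he
      · obtain ⟨r, hr⟩ := h
        omega
    have : i + 1 < (L i + 1)! := L_succ i
    have hle2 : (L i + 1)! ≤ (2*k)! := Nat.factorial_le (by omega)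
    rw [Finset.mem_range]
    omega
  calc _ ≤ (Finset.range ((2*k)!)).card := Finset.card_le_card hsub
    _ = (2*k)! := Finset.card_range _

lemma H_bF : ∀ ε : ℝ, 0 < ε → ∀ N : ℕ, ∃ n, N ≤ n ∧ (cardfree bF n : ℝ) ≤ ε * n := by
  intro ε hε N
  obtain ⟨k0, hk0⟩ := exists_nat_gt (1/ε)
  set k := max k0 N with hk
  refine ⟨(2*k+2)! - 1, ?_, ?_⟩
  · have h1 : 2*k+2 ≤ (2*k+2)! := Nat.self_le_factorial _
    have : N ≤ k := le_max_right _ _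
    omega
  · have hcard := cardfree_bF k
    have hfact : (2*k+2)! = (2*k+2) * (2*k+1)! := rfl
    have hfp : 1 ≤ (2*k+1)! := Nat.factorial_pos _
    have hsplit : (2*k+2) * (2*k+1)! = (2*k+1) * (2*k+1)! + (2*k+1)! := by ring
    have hge : (2*k+1) * (2*k+1)! ≤ (2*k+2)! - 1 := by
      rw [hfact]
      omega
    have hεk : 1 ≤ ε * (2*k+1) := by
      have hk0' : (1/ε) < k0 := hk0
      have : (k0 : ℝ) ≤ (k : ℝ) := by exact_mod_cast le_max_left k0 N
      rw [div_lt_iff₀ hε] at hk0'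
      have h2 : (1:ℝ) ≤ ε * k0 := by nlinarith
      have : ε * k0 ≤ ε * (2*k+1) := by
        apply mul_le_mul_of_nonneg_left _ hε.le
        push_cast
        nlinarith
      linarith
    calc (cardfree bF ((2*k+2)! - 1) : ℝ) ≤ ((2*k+1)! : ℝ) := by exact_mod_cast hcard
      _ ≤ (ε * (2*k+1)) * (2*k+1)! := by nlinarith [(Nat.cast_pos (α := ℝ)).mpr (Nat.factorial_pos (2*k+1))]
      _ = ε * ((2*k+1) * (2*k+1)! : ℕ) := by push_cast; ring
      _ ≤ ε * (((2*k+2)! - 1 : ℕ) : ℝ) := by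
          apply mul_le_mul_of_nonneg_left _ hε.le
          exact_mod_cast hge

lemma H_bG : ∀ ε : ℝ, 0 < ε → ∀ N : ℕ, ∃ n, N ≤ n ∧ (cardfree (fun i => !(bF i)) n : ℝ) ≤ ε * n := by
  intro ε hε N
  obtain ⟨k0, hk0⟩ := exists_nat_gt (1/ε)
  set k := max (max k0 N) 1 with hk
  have hk1 : 1 ≤ k := le_max_right _ _
  refine ⟨(2*k+1)! - 1, ?_, ?_⟩
  · have h1 : 2*k+1 ≤ (2*k+1)! := Nat.self_le_factorial _
    have : N ≤ k := le_trans (le_max_right _ _) (le_max_left _ _)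
    omega
  · have hcard := cardfree_bG k hk1
    have hfact : (2*k+1)! = (2*k+1) * (2*k)! := rfl
    have hfp : 1 ≤ (2*k)! := Nat.factorial_pos _
    have hsplit : (2*k+1) * (2*k)! = (2*k) * (2*k)! + (2*k)! := by ring
    have hge : (2*k) * (2*k)! ≤ (2*k+1)! - 1 := by
      rw [hfact]
      omega
    have hεk : 1 ≤ ε * (2*k) := by
      have hk0' : (1/ε) < k0 := hk0
      have hkk : (k0 : ℝ) ≤ (k : ℝ) := by
        exact_mod_cast le_trans (le_max_left k0 N) (le_max_left _ 1)
      rw [div_lt_iff₀ hε] at hk0'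
      have h2 : (1:ℝ) ≤ ε * k0 := by nlinarith
      have : ε * k0 ≤ ε * (2*k) := by
        apply mul_le_mul_of_nonneg_left _ hε.le
        push_cast
        have : (1:ℝ) ≤ (k:ℝ) := by exact_mod_cast hk1
        nlinarith
      linarith
    calc (cardfree (fun i => !(bF i)) ((2*k+1)! - 1) : ℝ) ≤ ((2*k)! : ℝ) := by exact_mod_cast hcard
      _ ≤ (ε * (2*k)) * (2*k)! := by nlinarith [(Nat.cast_pos (α := ℝ)).mpr (Nat.factorial_pos (2*k))]
      _ = ε * ((2*k) * (2*k)! : ℕ) := by push_cast; ring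
      _ ≤ ε * (((2*k+1)! - 1 : ℕ) : ℝ) := by
          apply mul_le_mul_of_nonneg_left _ hε.le
          exact_mod_cast hge
lemma coverNum_ne_top {α : Type*} [PseudoMetricSpace α] {F : Set α} (hF : IsCompact F)
    {δ : ℝ} (hδ : 0 < δ) : coverNum F δ ≠ ⊤ := by
  obtain ⟨t, htsub, htfin, htcov⟩ :=
    Metric.finite_approx_of_totallyBounded hF.totallyBounded δ hδ
  have hle : coverNum F δ ≤ (htfin.toFinset.card : ℕ∞) := by
    apply sInf_le
    refine ⟨htfin.toFinset, by simpa using htsub, rfl, ?_⟩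
    intro x hx
    obtain ⟨y, hy, hxy⟩ := Set.mem_iUnion₂.mp (htcov hx)
    exact Set.mem_biUnion (htfin.mem_toFinset.mpr hy) (Metric.ball_subset_closedBall hxy)
  exact ne_top_of_le_ne_top (ENat.coe_ne_top _) hle

lemma Icc_cover_lower {ε : ℝ} (hε : 0 < ε) (N : ℕ)
    (hN : coverNum (Set.Icc (0:ℝ) 1) ε ≤ (N : ℕ∞)) : (1:ℝ) ≤ N * (2 * ε) := by
  classical
  set S := {n : ℕ∞ | ∃ s : Finset ℝ, ↑s ⊆ Set.Icc (0:ℝ) 1 ∧ (s.card : ℕ∞) = n ∧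
    Set.Icc (0:ℝ) 1 ⊆ ⋃ x ∈ s, Metric.closedBall x ε} with hS
  have hne : S.Nonempty := by
    by_contra h
    rw [Set.not_nonempty_iff_eq_empty] at h
    have htop : coverNum (Set.Icc (0:ℝ) 1) ε = ⊤ := by
      have h0 : coverNum (Set.Icc (0:ℝ) 1) ε = sInf S := rfl
      rw [h0, h, sInf_empty]
    rw [htop, top_le_iff] at hN
    exact ENat.coe_ne_top N hN
  have hmem : sInf S ∈ S := csInf_mem hne
  obtain ⟨s, hsub, hcard, hcov⟩ := hmem
  have hcardN : s.card ≤ N := by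
    have h1 : (s.card : ℕ∞) ≤ (N : ℕ∞) := by
      rw [hcard]
      exact hN
    exact_mod_cast h1
  -- measure argument
  have hvol : MeasureTheory.volume (Set.Icc (0:ℝ) 1) ≤
      ∑ x ∈ s, MeasureTheory.volume (Metric.closedBall x ε) :=
    le_trans (MeasureTheory.measure_mono hcov) (MeasureTheory.measure_biUnion_finset_le _ _)
  rw [Real.volume_Icc] at hvol
  have hball : ∀ x ∈ s, MeasureTheory.volume (Metric.closedBall x ε) = ENNReal.ofReal (2 * ε) :=
    fun x _ => Real.volume_closedBall x ε
  rw [Finset.sum_congr rfl hball, Finset.sum_const, nsmul_eq_mul] at hvol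
  have h2 : ENNReal.ofReal (1 - 0) ≤ ENNReal.ofReal ((s.card : ℝ) * (2 * ε)) := by
    rw [ENNReal.ofReal_mul (by positivity)]
    convert hvol using 2
    simp [ENNReal.ofReal_natCast]
  rw [ENNReal.ofReal_le_ofReal_iff (by positivity)] at h2
  have : (s.card : ℝ) * (2 * ε) ≤ (N : ℝ) * (2 * ε) := by
    apply mul_le_mul_of_nonneg_right _ (by positivity)
    exact_mod_cast hcardN
  linarith

/-- the embedding ℝ × ℝ → ℝ² -/
noncomputable def emb (q : ℝ × ℝ) : EuclideanSpace ℝ (Fin 2) :=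
  (WithLp.equiv 2 (Fin 2 → ℝ)).symm ![q.1, q.2]

lemma continuous_emb : Continuous emb := by
  apply Continuous.comp
  · exact PiLp.continuous_toLp 2 (fun _ : Fin 2 => ℝ)
  · apply continuous_pi
    intro i
    fin_cases i
    · exact continuous_fst
    · exact continuous_snd

lemma emb_apply0 (q : ℝ × ℝ) : emb q 0 = q.1 := rfl
lemma emb_apply1 (q : ℝ × ℝ) : emb q 1 = q.2 := rfl

lemma coord_dist_le (p q : EuclideanSpace ℝ (Fin 2)) (i : Fin 2) :
    |p i - q i| ≤ dist p q := by
  rw [EuclideanSpace.dist_eq]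
  have h1 : |p i - q i| = Real.sqrt ((p i - q i)^2) := (Real.sqrt_sq_eq_abs _).symm
  rw [h1]
  apply Real.sqrt_le_sqrt
  have : dist (p i) (q i) ^ 2 ≤ ∑ j, dist (p j) (q j) ^ 2 :=
    Finset.single_le_sum (f := fun j => dist (p j) (q j) ^ 2)
      (fun j _ => by positivity) (Finset.mem_univ i)
  simpa [Real.dist_eq, sq_abs] using this
/-- the product set -/
noncomputable def Pset : Set (EuclideanSpace ℝ (Fin 2)) :=
  {p | p 0 ∈ K bF ∧ p 1 ∈ K (fun i => !(bF i))}

lemma Pset_eq : Pset = emb '' ((K bF) ×ˢ (K (fun i => !(bF i)))) := by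
  ext p
  constructor
  · rintro ⟨h0, h1⟩
    refine ⟨(p 0, p 1), ⟨h0, h1⟩, ?_⟩
    ext i
    fin_cases i <;> rfl
  · rintro ⟨⟨a, b⟩, ⟨ha, hb⟩, rfl⟩
    exact ⟨ha, hb⟩

lemma Pset_compact : IsCompact Pset := by
  rw [Pset_eq]
  exact ((K_compact bF).prod (K_compact _)).image continuous_emb

lemma coverNum_transfer {δ : ℝ} :
    coverNum (Set.Icc (0:ℝ) 1) (2*δ) ≤ coverNum Pset δ := by
  classical
  apply le_sInf
  rintro n ⟨s, hsub, hcard, hcov⟩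
  set σ : EuclideanSpace ℝ (Fin 2) → ℝ := fun p => p 0 + p 1 with hσ
  have hsum : K bF + K (fun i => !(bF i)) = Set.Icc 0 1 := K_add_K bF
  have hmem_s' : ↑(s.image σ) ⊆ Set.Icc (0:ℝ) 1 := by
    intro x hx
    simp only [Finset.coe_image, Set.mem_image, Finset.mem_coe] at hx
    obtain ⟨p, hp, rfl⟩ := hx
    have hpP := hsub hp
    rw [← hsum]
    exact Set.add_mem_add hpP.1 hpP.2
  have hcov' : Set.Icc (0:ℝ) 1 ⊆ ⋃ x ∈ s.image σ, Metric.closedBall x (2*δ) := by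
    intro x hx
    rw [← hsum] at hx
    obtain ⟨a, ha, b, hb, rfl⟩ := hx
    have hp : emb (a, b) ∈ Pset := ⟨ha, hb⟩
    obtain ⟨q, hq, hdq⟩ := Set.mem_iUnion₂.mp (hcov hp)
    apply Set.mem_biUnion (Finset.mem_image_of_mem σ hq)
    rw [Metric.mem_closedBall] at hdq ⊢
    have h0 := coord_dist_le (emb (a,b)) q 0
    have h1 := coord_dist_le (emb (a,b)) q 1
    rw [emb_apply0] at h0
    rw [emb_apply1] at h1
    have habs : dist (a + b) (σ q) ≤ |a - q 0| + |b - q 1| := by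
      rw [Real.dist_eq]
      have : a + b - σ q = (a - q 0) + (b - q 1) := by rw [hσ]; ring
      rw [this]
      exact abs_add_le _ _
    linarith
  calc coverNum (Set.Icc (0:ℝ) 1) (2*δ) ≤ ((s.image σ).card : ℕ∞) :=
        sInf_le ⟨s.image σ, hmem_s', rfl, hcov'⟩
    _ ≤ (s.card : ℕ∞) := by exact_mod_cast Finset.card_image_le
    _ = n := hcard

lemma K_cover (b : ℕ → Bool) (n : ℕ) :
    ∃ s : Finset ℝ, ↑s ⊆ K b ∧ s.card ≤ 2 ^ n ∧
      K b ⊆ ⋃ x ∈ s, Metric.closedBall x ((2:ℝ)⁻¹ ^ n) := by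
  classical
  set T := (Finset.range n).filter (fun i => b i = true) with hT
  set S : Finset ℝ := T.powerset.image (fun t => val (fun i => decide (i ∈ t))) with hS
  refine ⟨S, ?_, ?_, ?_⟩
  · intro x hx
    simp only [hS, Finset.coe_image, Set.mem_image, Finset.mem_coe, Finset.mem_powerset] at hx
    obtain ⟨t, ht, rfl⟩ := hx
    refine ⟨_, fun i hi => ?_, rfl⟩
    have hit : i ∈ t := by simpa using hi
    have := ht hit
    simp [hT] at this
    exact this.2
  · calc S.card ≤ T.powerset.card := Finset.card_image_le
      _ = 2 ^ T.card := Finset.card_powerset T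
      _ ≤ 2 ^ n := Nat.pow_le_pow_right (by norm_num)
          (le_trans (Finset.card_filter_le _ _) (le_of_eq (Finset.card_range n)))
  · rintro x ⟨f, hf, rfl⟩
    set t : Finset ℕ := (Finset.range n).filter (fun i => f i = true) with ht
    have htT : t ⊆ T := by
      intro i hi
      simp [ht] at hi
      simp [hT]
      exact ⟨hi.1, hf i hi.2⟩
    have heq : (fun i => decide (i ∈ t)) = trunc f n := by
      funext i
      by_cases h1 : f i = true <;> by_cases h2 : i < n <;>
        simp [ht, trunc, Finset.mem_filter, Finset.mem_range, h1, h2]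
    have hmem : val (trunc f n) ∈ S := by
      rw [← heq]
      exact Finset.mem_image_of_mem _ (Finset.mem_powerset.mpr htT)
    apply Set.mem_biUnion hmem
    rw [Metric.mem_closedBall, Real.dist_eq]
    obtain ⟨h1, h2⟩ := val_trunc_dist f n
    rw [abs_of_nonneg h1]; exact h2

lemma coverNum_P_le (n : ℕ) :
    coverNum Pset ((2:ℝ)⁻¹ ^ n * 2) ≤ ((4 ^ n : ℕ) : ℕ∞) := by
  classical
  obtain ⟨sF, hsF, hcF, hcovF⟩ := K_cover bF n
  obtain ⟨sG, hsG, hcG, hcovG⟩ := K_cover (fun i => !(bF i)) n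
  set sP : Finset (EuclideanSpace ℝ (Fin 2)) := (sF ×ˢ sG).image emb with hsP
  have hsub : ↑sP ⊆ Pset := by
    intro p hp
    simp only [hsP, Finset.coe_image, Set.mem_image, Finset.mem_coe, Finset.mem_product] at hp
    obtain ⟨⟨x, y⟩, ⟨hx, hy⟩, rfl⟩ := hp
    exact ⟨hsF hx, hsG hy⟩
  have hcov : Pset ⊆ ⋃ c ∈ sP, Metric.closedBall c ((2:ℝ)⁻¹ ^ n * 2) := by
    rintro p ⟨hp0, hp1⟩
    obtain ⟨x, hx, hdx⟩ := Set.mem_iUnion₂.mp (hcovF hp0)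
    obtain ⟨y, hy, hdy⟩ := Set.mem_iUnion₂.mp (hcovG hp1)
    have hcmem : emb (x, y) ∈ sP :=
      Finset.mem_image_of_mem _ (Finset.mem_product.mpr ⟨hx, hy⟩)
    apply Set.mem_biUnion hcmem
    rw [Metric.mem_closedBall] at hdx hdy ⊢
    rw [Real.dist_eq] at hdx hdy
    have hpow : (0:ℝ) < (2:ℝ)⁻¹ ^ n := by positivity
    rw [EuclideanSpace.dist_eq]
    have hsum : ∑ j, dist (p j) (emb (x, y) j) ^ 2 ≤ ((2:ℝ)⁻¹ ^ n * 2)^2 := by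
      rw [Fin.sum_univ_two]
      have h0 : dist (p 0) (emb (x,y) 0) = |p 0 - x| := Real.dist_eq _ _
      have h1 : dist (p 1) (emb (x,y) 1) = |p 1 - y| := Real.dist_eq _ _
      rw [h0, h1]
      have e0 : |p 0 - x| ^ 2 ≤ ((2:ℝ)⁻¹ ^ n)^2 := by
        have := abs_nonneg (p 0 - x)
        nlinarith
      have e1 : |p 1 - y| ^ 2 ≤ ((2:ℝ)⁻¹ ^ n)^2 := by
        have := abs_nonneg (p 1 - y)
        nlinarith
      nlinarith
    calc Real.sqrt (∑ j, dist (p j) (emb (x, y) j) ^ 2)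
        ≤ Real.sqrt (((2:ℝ)⁻¹ ^ n * 2)^2) := Real.sqrt_le_sqrt hsum
      _ = (2:ℝ)⁻¹ ^ n * 2 := Real.sqrt_sq (by positivity)
  calc coverNum Pset ((2:ℝ)⁻¹ ^ n * 2) ≤ (sP.card : ℕ∞) := sInf_le ⟨sP, hsub, rfl, hcov⟩
    _ ≤ ((4 ^ n : ℕ) : ℕ∞) := by
        have : sP.card ≤ 2 ^ n * 2 ^ n := by
          calc sP.card ≤ (sF ×ˢ sG).card := Finset.card_image_le
            _ = sF.card * sG.card := Finset.card_product _ _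
            _ ≤ 2 ^ n * 2 ^ n := Nat.mul_le_mul hcF hcG
        have h4 : (2:ℕ) ^ n * 2 ^ n = 4 ^ n := by
          rw [← Nat.mul_pow]
        exact_mod_cast le_trans this (le_of_eq h4)

lemma u_freq_le :
    ∃ᶠ δ in nhdsWithin (0:ℝ) (Set.Ioi 0),
      Real.log (((coverNum Pset δ).toNat : ℝ)) / (-Real.log δ) ≤ 4 := by
  rw [Filter.frequently_iff]
  intro U hU
  obtain ⟨a, ha, hsub⟩ := mem_nhdsGT_iff_exists_Ioo_subset.mp hU
  have ha0 : (0:ℝ) < a := Set.mem_Ioi.mp ha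
  obtain ⟨N, hN⟩ := exists_pow_lt_of_lt_one (half_pos ha0) (by norm_num : (2:ℝ)⁻¹ < 1)
  set n := max N 2 with hn
  have hn2 : 2 ≤ n := le_max_right _ _
  set δ := (2:ℝ)⁻¹ ^ n * 2 with hδ
  have hδ0 : 0 < δ := by positivity
  have hδa : δ < a := by
    have h1 : (2:ℝ)⁻¹ ^ n ≤ (2:ℝ)⁻¹ ^ N :=
      pow_le_pow_of_le_one (by norm_num) (by norm_num) (le_max_left _ _)
    have := lt_of_le_of_lt h1 hN
    rw [hδ]
    linarith
  refine ⟨δ, hsub ⟨hδ0, hδa⟩, ?_⟩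
  have hlog2 : (0:ℝ) < Real.log 2 := Real.log_pos (by norm_num)
  have hnr : (2:ℝ) ≤ (n:ℝ) := by exact_mod_cast hn2
  have hden : -Real.log δ = ((n:ℝ) - 1) * Real.log 2 := by
    rw [hδ, Real.log_mul (by positivity) (by norm_num), Real.log_pow, Real.log_inv]
    push_cast; ring
  have hfin : ((4 ^ n : ℕ) : ℕ∞) ≠ ⊤ := ENat.coe_ne_top _
  have h1 : (coverNum Pset δ).toNat ≤ 4 ^ n := by
    have h := ENat.toNat_le_toNat (coverNum_P_le n) hfin
    rw [ENat.toNat_coe] at h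
    exact h
  have hnum : Real.log ((coverNum Pset δ).toNat : ℝ) ≤ (n:ℝ) * (2 * Real.log 2) := by
    rcases Nat.eq_zero_or_pos (coverNum Pset δ).toNat with h0 | h0
    · rw [h0]; simp; positivity
    · calc Real.log ((coverNum Pset δ).toNat : ℝ)
          ≤ Real.log ((4 ^ n : ℕ) : ℝ) :=
            Real.log_le_log (by exact_mod_cast h0) (by exact_mod_cast h1)
        _ = (n:ℝ) * Real.log 4 := by push_cast; rw [Real.log_pow]
        _ = (n:ℝ) * (2 * Real.log 2) := by
            rw [show (4:ℝ) = 2^2 by norm_num, Real.log_pow]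
            push_cast; ring
  rw [hden, div_le_iff₀ (by nlinarith)]
  nlinarith
lemma dim_P : 1 ≤ lowerMinkDim Pset := by
  set l := nhdsWithin (0:ℝ) (Set.Ioi 0) with hldef
  set u := fun δ : ℝ => Real.log (((coverNum Pset δ).toNat : ℝ)) / (-Real.log δ) with hudef
  set g := fun δ : ℝ => 1 - Real.log 4 / (-Real.log δ) with hgdef
  have hIoo : Set.Ioo (0:ℝ) (1/2) ∈ l := Ioo_mem_nhdsGT_of_mem ⟨le_refl 0, by norm_num⟩
  have hIoo1 : Set.Ioo (0:ℝ) 1 ∈ l := Ioo_mem_nhdsGT_of_mem ⟨le_refl 0, by norm_num⟩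
  have hkey : ∀ δ ∈ Set.Ioo (0:ℝ) (1/2), g δ ≤ u δ := by
    rintro δ ⟨hδ0, hδ1⟩
    set N := (coverNum Pset δ).toNat with hNdef
    have hfin : coverNum Pset δ ≠ ⊤ := coverNum_ne_top Pset_compact hδ0
    have htrans : coverNum (Set.Icc (0:ℝ) 1) (2*δ) ≤ (N : ℕ∞) := by
      rw [hNdef, ENat.coe_toNat hfin]
      exact coverNum_transfer
    have hlow : (1:ℝ) ≤ N * (2*(2*δ)) := Icc_cover_lower (by linarith) N htrans
    have hN0 : 0 < (N:ℝ) := by nlinarith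
    have hdivN : 1/(4*δ) ≤ (N:ℝ) := by
      rw [div_le_iff₀ (by linarith)]
      nlinarith
    have hlogN : Real.log (1/(4*δ)) ≤ Real.log N :=
      Real.log_le_log (by positivity) hdivN
    have hlogδ : Real.log δ < 0 := Real.log_neg hδ0 (by linarith)
    have hid : Real.log (1/(4*δ)) = -(Real.log 4 + Real.log δ) := by
      rw [one_div, Real.log_inv, Real.log_mul (by norm_num) (ne_of_gt hδ0)]
    have hden : 0 < -Real.log δ := by linarith
    have hg : g δ = (-Real.log δ - Real.log 4)/(-Real.log δ) := by
      show 1 - Real.log 4 / (-Real.log δ) = _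
      rw [sub_div, div_self (ne_of_gt hden)]
    have hnum : -Real.log δ - Real.log 4 ≤ Real.log (N:ℝ) := by
      rw [hid] at hlogN
      linarith
    rw [hg]
    exact (div_le_div_iff_of_pos_right hden).mpr hnum
  have hu0 : ∀ᶠ δ in l, 0 ≤ u δ := by
    filter_upwards [hIoo1] with δ hδ
    exact ratio_nonneg _ hδ.1 hδ.2
  have hg1 : Filter.Tendsto g l (nhds 1) := by
    have h1 : Filter.Tendsto (fun δ : ℝ => -Real.log δ) l Filter.atTop :=
      Filter.tendsto_neg_atTop_iff.mpr Real.tendsto_log_nhdsGT_zero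
    have h2 : Filter.Tendsto (fun δ : ℝ => Real.log 4 / (-Real.log δ)) l (nhds 0) :=
      Filter.Tendsto.div_atTop tendsto_const_nhds h1
    have h3 := (tendsto_const_nhds (x := (1:ℝ)) (f := l)).sub h2
    simpa using h3
  have hliminfg : Filter.liminf g l = 1 := hg1.liminf_eq
  have hcob : Filter.IsCoboundedUnder (· ≥ ·) l g := hg1.isCoboundedUnder_ge
  have hbdd : Filter.IsBoundedUnder (· ≥ ·) l u := ⟨0, by simpa using hu0⟩
  have hev : ∀ᶠ δ in l, g δ ≤ u δ := by
    filter_upwards [hIoo] with δ hδ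
    exact hkey δ hδ
  have hgev : ∀ᶠ δ in l, (1:ℝ)/2 ≤ g δ := hg1.eventually (Ici_mem_nhds (by norm_num : (1:ℝ)/2 < 1))
  have hbddg : Filter.IsBoundedUnder (· ≥ ·) l g := ⟨1/2, by simpa using hgev⟩
  have hcobu : Filter.IsCoboundedUnder (· ≥ ·) l u :=
    Filter.IsCoboundedUnder.of_frequently_le u_freq_le
  calc (1:ℝ) = Filter.liminf g l := hliminfg.symm
    _ ≤ Filter.liminf u l := Filter.liminf_le_liminf hev hbddg hcobu
end Stmt15

/-- There exist nonempty compact sets `F, G ⊆ [0,1]` of lower Minkowski dimension zero whose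
sumset is all of `[0,1]`, so that the Cartesian product `F × G ⊆ ℝ²` (Euclidean metric) has
lower Minkowski dimension at least 1. -/
theorem stmt15 :
    ∃ F G : Set ℝ, F.Nonempty ∧ G.Nonempty ∧ IsCompact F ∧ IsCompact G ∧
      F ⊆ Set.Icc 0 1 ∧ G ⊆ Set.Icc 0 1 ∧
      lowerMinkDim F = 0 ∧ lowerMinkDim G = 0 ∧
      F + G = Set.Icc 0 1 ∧
      1 ≤ lowerMinkDim {p : EuclideanSpace ℝ (Fin 2) | p 0 ∈ F ∧ p 1 ∈ G} := by
  exact ⟨Stmt15.K Stmt15.bF, Stmt15.K (fun i => !(Stmt15.bF i)),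
    Stmt15.K_nonempty _, Stmt15.K_nonempty _, Stmt15.K_compact _, Stmt15.K_compact _,
    Stmt15.K_subset _, Stmt15.K_subset _,
    Stmt15.lowerMinkDim_K_zero _ Stmt15.H_bF, Stmt15.lowerMinkDim_K_zero _ Stmt15.H_bG,
    Stmt15.K_add_K Stmt15.bF, Stmt15.dim_P⟩
end
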